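/- arXiv:math/0509421 — 10 statements merged into one kernel-verified Lean document; each statement's English description precedes it below -/
import Mathlib

section
/- Let A be an abelian power subgroup of a group G. Then a subgroup H with H ≤ A is a power subgroup of G if and only if H is a power subgroup of A. -/
/-- `G^m`: the subgroup generated by all `m`-th powers of elements of `G`. -/
def powerSubgroup (G : Type*) [Group G] (m : ℕ) : Subgroup G :=
  Subgroup.closure (Set.range fun g : G => g ^ m)

lemma pow_mem_powerSubgroup {G : Type*} [Group G] (m : ℕ) (g : G) :
    g ^ m ∈ powerSubgroup G m :=
  Subgroup.subset_closure ⟨g, rfl⟩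

lemma powerSubgroup_le_of_dvd {G : Type*} [Group G] {m n : ℕ} (h : m ∣ n) :
    powerSubgroup G n ≤ powerSubgroup G m := by
  obtain ⟨c, rfl⟩ := h
  refine (Subgroup.closure_le _).2 ?_
  rintro x ⟨g, rfl⟩
  simpa [pow_mul] using Subgroup.pow_mem _ (pow_mem_powerSubgroup m g) c

lemma map_powerSubgroup {G : Type*} [Group G] {A : Subgroup G}
    (hA : ∀ a b : A, a * b = b * a) {l : ℕ} (hAl : A = powerSubgroup G l) (k : ℕ) :
    (powerSubgroup A k).map A.subtype = powerSubgroup G (l * k) := by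
  apply le_antisymm
  · rw [powerSubgroup, MonoidHom.map_closure]
    refine (Subgroup.closure_le _).2 ?_
    rintro x ⟨-, ⟨a, rfl⟩, rfl⟩
    have ha : (a : G) ∈ powerSubgroup G l := hAl ▸ a.2
    have main : ∀ x : G, ∀ hx : x ∈ powerSubgroup G l, x ^ k ∈ powerSubgroup G (l * k) := by
      intro x hx
      induction hx using Subgroup.closure_induction with
      | mem x hx =>
          obtain ⟨g, rfl⟩ := hx
          rw [← pow_mul]
          exact pow_mem_powerSubgroup (l * k) g
      | one => simpa using Subgroup.one_mem _
      | mul x y hx hy px py =>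
          have hcomm : Commute x y := by
            have := hA ⟨x, hAl ▸ hx⟩ ⟨y, hAl ▸ hy⟩
            exact congrArg Subtype.val this
          rw [hcomm.mul_pow]
          exact Subgroup.mul_mem _ px py
      | inv x hx px => rw [inv_pow]; exact Subgroup.inv_mem _ px
    simpa using main (a : G) ha
  · refine (Subgroup.closure_le _).2 ?_
    rintro x ⟨g, rfl⟩
    have hgl : g ^ l ∈ A := hAl ▸ pow_mem_powerSubgroup l g
    refine ⟨(⟨g ^ l, hgl⟩ : A) ^ k, Subgroup.subset_closure ⟨_, rfl⟩, ?_⟩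
    simp [pow_mul]

theorem power_subgroups_of_abelian_power_subgroup {G : Type*} [Group G]
    (A : Subgroup G) (hA : ∀ a b : A, a * b = b * a)
    (hApow : ∃ l : ℕ, A = powerSubgroup G l)
    (H : Subgroup G) (hHA : H ≤ A) :
    (∃ m : ℕ, H = powerSubgroup G m) ↔ (∃ m : ℕ, H.subgroupOf A = powerSubgroup A m) := by
  obtain ⟨l, hAl⟩ := hApow
  constructor
  · rintro ⟨m, rfl⟩
    set d := Nat.gcd m l with hd
    refine ⟨m / d, ?_⟩
    have key : powerSubgroup G m = (powerSubgroup A (m / d)).map A.subtype := by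
      apply le_antisymm
      · refine (Subgroup.closure_le _).2 ?_
        rintro x ⟨g, rfl⟩
        have hm : g ^ m ∈ A := hHA (pow_mem_powerSubgroup m g)
        have hl : g ^ l ∈ A := hAl ▸ pow_mem_powerSubgroup l g
        have hgd : g ^ d ∈ A := by
          have hz : (g : G) ^ (d : ℤ) = (g ^ m) ^ Nat.gcdA m l * (g ^ l) ^ Nat.gcdB m l := by
            rw [← zpow_natCast g m, ← zpow_natCast g l, ← zpow_mul, ← zpow_mul, ← zpow_add,
              hd, Nat.gcd_eq_gcd_ab]
          rw [← zpow_natCast g d, hz]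
          exact Subgroup.mul_mem _ (Subgroup.zpow_mem _ hm _) (Subgroup.zpow_mem _ hl _)
        have hgm : g ^ m = (g ^ d) ^ (m / d) := by
          rw [← pow_mul, Nat.mul_div_cancel' (Nat.gcd_dvd_left m l)]
        refine ⟨(⟨g ^ d, hgd⟩ : A) ^ (m / d), Subgroup.subset_closure ⟨_, rfl⟩, ?_⟩
        simp [hgm]
      · rw [map_powerSubgroup hA hAl]
        apply powerSubgroup_le_of_dvd
        obtain ⟨e, he⟩ := Nat.gcd_dvd_right m l
        refine ⟨e, ?_⟩
        calc l * (m / d) = e * (d * (m / d)) := by rw [he, ← hd]; ring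
          _ = m * e := by rw [Nat.mul_div_cancel' (Nat.gcd_dvd_left m l)]; ring
    rw [key, Subgroup.subgroupOf, Subgroup.comap_map_eq_self_of_injective A.subtype_injective]
  · rintro ⟨k, hk⟩
    refine ⟨l * k, ?_⟩
    have hmap : (H.subgroupOf A).map A.subtype = H := (Subgroup.subgroupOf_map_subtype H A).trans (inf_of_le_left hHA)
    rw [hk, map_powerSubgroup hA hAl] at hmap
    exact hmap.symm
end

section
/- If G is an infinite abelian group all of whose proper quotient groups (i.e., quotients by nontrivial subgroups) are finite, then G is infinite cyclic, i.e., isomorphic to the integers. -/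
/-- If `g` has infinite order, then `Multiplicative ℤ ≃* zpowers g`. -/
noncomputable def zpowersMulEquivAux {H : Type*} [Group H] (g : H) (hg : ¬ IsOfFinOrder g) :
    Multiplicative ℤ ≃* Subgroup.zpowers g := by
  refine MulEquiv.ofBijective
    ((zpowersHom H g).codRestrict (Subgroup.zpowers g) ?_) ⟨?_, ?_⟩
  · intro n
    exact Subgroup.zpow_mem _ (Subgroup.mem_zpowers g) _
  · intro a b hab
    have h2 : (g ^ (a.toAdd) : H) = g ^ (b.toAdd) := congrArg Subtype.val hab
    have := injective_zpow_iff_not_isOfFinOrder.2 hg h2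
    exact Multiplicative.toAdd.injective this
  · rintro ⟨x, k, hk⟩
    exact ⟨Multiplicative.ofAdd k, Subtype.ext hk⟩

theorem infinite_cyclic_of_proper_quotients_finite {G : Type*} [CommGroup G] [Infinite G]
    (h : ∀ N : Subgroup G, N ≠ ⊥ → Finite (G ⧸ N)) :
    Nonempty (G ≃* Multiplicative ℤ) := by
  -- G is torsion-free
  have tf : ∀ x : G, x ≠ 1 → ¬ IsOfFinOrder x := by
    intro x hx hfin
    have hN : Subgroup.zpowers x ≠ ⊥ := by
      simpa [Subgroup.zpowers_eq_bot] using hx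
    have h1 : Finite (G ⧸ Subgroup.zpowers x) := h _ hN
    have h2 : Finite (Subgroup.zpowers x) := by
      have : (Subgroup.zpowers x : Set G).Finite := by
        rw [← hfin.powers_eq_zpowers]; exact hfin.finite_powers
      exact this
    haveI : Finite G :=
      Finite.of_equiv _ (Subgroup.groupEquivQuotientProdSubgroup
        (s := Subgroup.zpowers x)).symm
    exact not_finite G
  obtain ⟨g, hg⟩ := exists_ne (1 : G)
  set N := Subgroup.zpowers g with hNdef
  have hNbot : N ≠ ⊥ := by simpa [hNdef, Subgroup.zpowers_eq_bot] using hg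
  haveI : Finite (G ⧸ N) := h N hNbot
  set m := N.index with hm
  have hm0 : m ≠ 0 := Subgroup.index_ne_zero_of_finite
  -- the m-th power map lands in N
  have hmem : ∀ x : G, x ^ m ∈ N := fun x => N.pow_index_mem x
  have hginf : ¬ IsOfFinOrder g := tf g hg
  -- injective hom G →* N
  let f : G →* N := (powMonoidHom m).codRestrict N hmem
  have hfinj : Function.Injective f := by
    rw [injective_iff_map_eq_one]
    intro x hx
    by_contra hx1
    have : x ^ m = 1 := congrArg Subtype.val hx
    exact tf x hx1 (isOfFinOrder_iff_pow_eq_one.2 ⟨m, by omega, this⟩)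
  -- G embeds into Multiplicative ℤ
  let e : G →* Multiplicative ℤ :=
    ((zpowersMulEquivAux g hginf).symm.toMonoidHom).comp f
  have heinj : Function.Injective e :=
    (zpowersMulEquivAux g hginf).symm.injective.comp hfinj
  -- hence G is cyclic
  haveI : IsCyclic G := by
    have e' : G ≃* e.range := MonoidHom.ofInjective heinj
    exact isCyclic_of_surjective e'.symm e'.symm.surjective
  obtain ⟨u, hu⟩ := IsCyclic.exists_generator (α := G)
  have hu1 : u ≠ 1 := by
    rintro rfl
    have := hu g
    rw [Subgroup.zpowers_one_eq_bot, Subgroup.mem_bot] at this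
    exact hg this
  have huinf : ¬ IsOfFinOrder u := tf u hu1
  have htop : Subgroup.zpowers u = ⊤ := by
    rw [Subgroup.eq_top_iff']; exact hu
  exact ⟨((htop ▸ zpowersMulEquivAux u huinf).trans Subgroup.topEquiv).symm⟩
end

section
/- A non-cyclic group contains at least one non-power subgroup: if every subgroup of a group G is of the form G^m for some non-negative integer m, then G is cyclic. -/
namespace PowerAux

variable {G : Type*} [Group G]

lemma pow_mem_power (g : G) (m : ℕ) : g ^ m ∈ powerSubgroup G m :=
  Subgroup.subset_closure ⟨g, rfl⟩

lemma power_zero : powerSubgroup G 0 = ⊥ := by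
  apply le_antisymm
  · rw [powerSubgroup, Subgroup.closure_le]
    rintro _ ⟨g, rfl⟩
    simp
  · exact bot_le

lemma power_le_of_dvd {a b : ℕ} (hab : a ∣ b) : powerSubgroup G b ≤ powerSubgroup G a := by
  rw [powerSubgroup, Subgroup.closure_le]
  rintro _ ⟨g, rfl⟩
  obtain ⟨c, rfl⟩ := hab
  show g ^ (a * c) ∈ _
  rw [pow_mul]
  exact Subgroup.pow_mem _ (pow_mem_power g a) c

instance power_normal (m : ℕ) : (powerSubgroup G m).Normal := by
  constructor
  intro x hx g
  induction hx using Subgroup.closure_induction with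
  | mem y hy =>
    obtain ⟨z, rfl⟩ := hy
    have : g * z ^ m * g⁻¹ = (g * z * g⁻¹) ^ m := by
      rw [conj_pow]
    rw [this]
    exact pow_mem_power _ m
  | one => simpa using (powerSubgroup G m).one_mem
  | mul y z hy hz hy' hz' =>
    have : g * (y * z) * g⁻¹ = (g * y * g⁻¹) * (g * z * g⁻¹) := by group
    rw [this]; exact mul_mem hy' hz'
  | inv y hy hy' =>
    have : g * y⁻¹ * g⁻¹ = (g * y * g⁻¹)⁻¹ := by group
    rw [this]; exact inv_mem hy'

lemma power_gcd_eq {n : ℕ} (hn : ∀ g : G, g ^ n = 1) (a : ℕ) :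
    powerSubgroup G (Nat.gcd a n) = powerSubgroup G a := by
  apply le_antisymm
  · rw [powerSubgroup, Subgroup.closure_le]
    rintro _ ⟨g, rfl⟩
    have hb : ((Nat.gcd a n : ℤ)) = a * Nat.gcdA a n + n * Nat.gcdB a n := Nat.gcd_eq_gcd_ab a n
    have : (g : G) ^ (Nat.gcd a n : ℤ) = (g ^ a) ^ Nat.gcdA a n * (g ^ n) ^ Nat.gcdB a n := by
      rw [hb, zpow_add, ← zpow_natCast g a, ← zpow_natCast g n, ← zpow_mul, ← zpow_mul]
    show g ^ Nat.gcd a n ∈ _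
    rw [← zpow_natCast g (Nat.gcd a n), this, hn g, one_zpow, mul_one]
    exact Subgroup.zpow_mem _ (pow_mem_power g a) _
  · exact power_le_of_dvd (Nat.gcd_dvd_left a n)





lemma comm_formula {x y c : G} (hc : y * x = c * x * y) (hcx : Commute c x) (hcy : Commute c y) :
    ∀ j i : ℕ, y ^ j * x ^ i = c ^ (i * j) * (x ^ i * y ^ j) := by
  have inner : ∀ i : ℕ, y * x ^ i = c ^ i * (x ^ i * y) := by
    intro i
    induction i with
    | zero => simp
    | succ i ih =>
      calc y * x ^ (i+1) = (y * x ^ i) * x := by rw [pow_succ]; group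
        _ = c ^ i * (x ^ i * (y * x)) := by rw [ih]; group
        _ = c ^ i * (x ^ i * (c * (x * y))) := by rw [hc]; group
        _ = c ^ i * (c * (x ^ i * (x * y))) := by
              rw [(hcx.pow_right i).symm.left_comm]
        _ = c ^ (i+1) * (x ^ (i+1) * y) := by rw [pow_succ, pow_succ]; group
  intro j
  induction j with
  | zero => simp
  | succ j ih =>
    intro i
    calc y ^ (j+1) * x ^ i = y ^ j * (y * x ^ i) := by rw [pow_succ]; group
      _ = y ^ j * (c ^ i * (x ^ i * y)) := by rw [inner]
      _ = c ^ i * (y ^ j * x ^ i * y) := by rw [((hcy.pow_left i).pow_right j).symm.left_comm]; group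
      _ = c ^ i * (c ^ (i * j) * (x ^ i * y ^ j) * y) := by rw [ih]
      _ = c ^ (i * (j+1)) * (x ^ i * y ^ (j+1)) := by
            rw [show i * (j+1) = i + i * j by ring, pow_add, pow_succ]; group



lemma commutator_props {x y : G} {a b : ℕ}
    (hx : Subgroup.zpowers x = powerSubgroup G a)
    (hy : Subgroup.zpowers y = powerSubgroup G b) :
    ∃ c : G, (y * x = c * x * y) ∧ Commute c x ∧ Commute c y := by
  refine ⟨y * x * y⁻¹ * x⁻¹, by group, ?_, ?_⟩
  · have hmem : y * x * y⁻¹ * x⁻¹ ∈ Subgroup.zpowers x := by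
      rw [hx]
      exact mul_mem ((power_normal a).conj_mem x (hx ▸ Subgroup.mem_zpowers x) y)
        (inv_mem (hx ▸ Subgroup.mem_zpowers x))
    obtain ⟨k, hk⟩ := Subgroup.mem_zpowers_iff.mp hmem
    rw [← hk]
    exact (Commute.refl x).zpow_left k
  · have hmem : y * x * y⁻¹ * x⁻¹ ∈ Subgroup.zpowers y := by
      rw [hy]
      have h1 : x * y⁻¹ * x⁻¹ ∈ powerSubgroup G b :=
        (power_normal b).conj_mem y⁻¹ (hy ▸ inv_mem (Subgroup.mem_zpowers y)) x
      have : y * x * y⁻¹ * x⁻¹ = y * (x * y⁻¹ * x⁻¹) := by group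
      rw [this]
      exact mul_mem (hy ▸ Subgroup.mem_zpowers y) h1
    obtain ⟨k, hk⟩ := Subgroup.mem_zpowers_iff.mp hmem
    rw [← hk]
    exact (Commute.refl y).zpow_left k

/-- If `y^a` commutes with `x` and `⟨x⟩ = G^a`, `⟨y⟩ = G^b`, then the commutator `c`
satisfies `c ^ a = 1`. -/
lemma commutator_pow_eq_one {x y c : G} {a : ℕ}
    (hc : y * x = c * x * y) (hcx : Commute c x) (hcy : Commute c y)
    (hya : Commute (y ^ a) x) : c ^ a = 1 := by
  have hf := comm_formula hc hcx hcy a 1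
  simp only [pow_one, one_mul] at hf
  rw [hya.eq] at hf
  exact (mul_eq_right.mp hf.symm)

theorem caseA (h : ∀ H : Subgroup G, ∃ m : ℕ, H = powerSubgroup G m)
    (g0 : G) (hg0 : ¬ IsOfFinOrder g0) : IsCyclic G := by
  classical
  -- G is torsion-free
  have tf : ∀ t : G, IsOfFinOrder t → t = 1 := by
    intro t ht
    obtain ⟨b, hb⟩ := h (Subgroup.zpowers t)
    rcases Nat.eq_zero_or_pos b with rfl | hbpos
    · rw [power_zero] at hb; exact Subgroup.zpowers_eq_bot.mp hb
    · exfalso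
      have h1 : g0 ^ b ∈ Subgroup.zpowers t := hb ▸ pow_mem_power g0 b
      obtain ⟨k, hk⟩ := Subgroup.mem_zpowers_iff.mp h1
      apply hg0
      rw [isOfFinOrder_iff_pow_eq_one]
      refine ⟨b * orderOf t, Nat.mul_pos hbpos ht.orderOf_pos, ?_⟩
      rw [pow_mul, ← hk, ← zpow_natCast (t ^ k), ← zpow_mul, mul_comm k (orderOf t),
        zpow_mul, zpow_natCast, pow_orderOf_eq_one, one_zpow]
  -- G is abelian
  have comm : ∀ x y : G, Commute x y := by
    intro x y
    obtain ⟨a, hx⟩ := h (Subgroup.zpowers x)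
    obtain ⟨b, hy⟩ := h (Subgroup.zpowers y)
    rcases Nat.eq_zero_or_pos a with rfl | hapos
    · rw [power_zero] at hx
      rw [Subgroup.zpowers_eq_bot.mp hx]
      exact Commute.one_left y
    obtain ⟨c, hc, hcx, hcy⟩ := commutator_props hx hy
    have hya : Commute (y ^ a) x := by
      have : y ^ a ∈ Subgroup.zpowers x := hx ▸ pow_mem_power y a
      obtain ⟨k, hk⟩ := Subgroup.mem_zpowers_iff.mp this
      rw [← hk]; exact (Commute.refl x).zpow_left k
    have hca : c ^ a = 1 := commutator_pow_eq_one hc hcx hcy hya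
    have hc1 : c = 1 := tf c (isOfFinOrder_iff_pow_eq_one.mpr ⟨a, hapos, hca⟩)
    rw [hc1, one_mul] at hc
    exact Commute.symm hc
  -- embed into ℤ
  obtain ⟨a₀, hx0⟩ := h (Subgroup.zpowers g0)
  have ha₀ : a₀ ≠ 0 := by
    rintro rfl
    rw [power_zero] at hx0
    exact hg0 (by rw [Subgroup.zpowers_eq_bot.mp hx0]; exact IsOfFinOrder.one)
  have inj : Function.Injective fun k : ℤ => g0 ^ k :=
    injective_zpow_iff_not_isOfFinOrder.mpr hg0
  have key : ∀ t : G, ∃ k : ℤ, g0 ^ k = t ^ a₀ := fun t =>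
    Subgroup.mem_zpowers_iff.mp (hx0 ▸ pow_mem_power t a₀)
  choose f hf using key
  have f1 : f 1 = 0 := by
    apply inj
    show g0 ^ f 1 = g0 ^ (0 : ℤ)
    rw [hf, one_pow, zpow_zero]
  have fmul : ∀ s t : G, f (s * t) = f s + f t := by
    intro s t
    apply inj
    show g0 ^ f (s * t) = g0 ^ (f s + f t)
    rw [zpow_add, hf, hf, hf, (comm s t).mul_pow]
  let φ : G →* Multiplicative ℤ :=
    { toFun := fun t => Multiplicative.ofAdd (f t)
      map_one' := by simp [f1]
      map_mul' := by intro s t; simp [fmul] }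
  have hφinj : Function.Injective φ := by
    rw [injective_iff_map_eq_one]
    intro t ht
    have : f t = 0 := by simpa [φ] using ht
    have hta : t ^ a₀ = 1 := by rw [← hf t, this, zpow_zero]
    exact tf t (isOfFinOrder_iff_pow_eq_one.mpr ⟨a₀, Nat.pos_of_ne_zero ha₀, hta⟩)
  have e := MonoidHom.ofInjective hφinj
  exact isCyclic_of_surjective e.symm e.symm.surjective

lemma mem_zpowers_pow_of_coprime {z : G} {m k : ℕ} (hco : Nat.gcd m k = 1) (hz : z ^ k = 1) :
    z ∈ Subgroup.zpowers (z ^ m) := by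
  have hb : ((Nat.gcd m k : ℤ)) = m * Nat.gcdA m k + k * Nat.gcdB m k := Nat.gcd_eq_gcd_ab m k
  rw [hco] at hb
  have h1 : z = (z ^ m) ^ Nat.gcdA m k * (z ^ k) ^ Nat.gcdB m k := by
    rw [← zpow_natCast z m, ← zpow_natCast z k, ← zpow_mul, ← zpow_mul, ← zpow_add, ← hb]
    simp
  rw [hz, one_zpow, mul_one] at h1
  exact ⟨Nat.gcdA m k, h1.symm⟩

lemma zpowers_eq_canonical (h : ∀ H : Subgroup G, ∃ m : ℕ, H = powerSubgroup G m)
    {n : ℕ} (hn : ∀ g : G, g ^ n = 1) (hn0 : n ≠ 0)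
    {p : ℕ} (hp : p.Prime) {x : G} (hx : ∃ i, x ^ p ^ i = 1) (hx1 : x ≠ 1) :
    ∃ α : ℕ, Subgroup.zpowers x = powerSubgroup G (p ^ α * ordCompl[p] n) := by
  obtain ⟨i, hxi⟩ := hx
  obtain ⟨a, hxa⟩ := h (Subgroup.zpowers x)
  have ha0 : a ≠ 0 := by
    rintro rfl
    rw [power_zero] at hxa
    exact hx1 (Subgroup.zpowers_eq_bot.mp hxa)
  set a' := Nat.gcd a n with ha'
  have hPa : Subgroup.zpowers x = powerSubgroup G a' := by
    rw [hxa, power_gcd_eq hn]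
  have ha'0 : a' ≠ 0 := Nat.gcd_ne_zero_right hn0
  have ha'n : a' ∣ n := Nat.gcd_dvd_right a n
  set α := a'.factorization p with hα
  set a₀ := ordCompl[p] a' with ha₀
  set n₀ := ordCompl[p] n with hn₀
  have ha₀n₀ : a₀ ∣ n₀ := Nat.ordCompl_dvd_ordCompl_of_dvd ha'n p
  have ha'eq : p ^ α * a₀ = a' := Nat.ordProj_mul_ordCompl_eq_self a' p
  have ha₀0 : a₀ ≠ 0 := (Nat.ordCompl_pos p ha'0).ne'
  refine ⟨α, le_antisymm ?_ ?_⟩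
  · -- zpowers x = P a' ≤ P (p^α * n₀)
    rw [hPa, powerSubgroup, Subgroup.closure_le]
    rintro _ ⟨g, rfl⟩
    show g ^ a' ∈ _
    set z := g ^ a' with hz
    have hzx : z ∈ Subgroup.zpowers x := by rw [hPa]; exact pow_mem_power g a'
    have hzp : z ^ p ^ i = 1 := by
      obtain ⟨k, hk⟩ := Subgroup.mem_zpowers_iff.mp hzx
      rw [← hk, ← zpow_natCast (x ^ k), ← zpow_mul, mul_comm k ((p ^ i : ℕ) : ℤ),
        zpow_mul, zpow_natCast, hxi, one_zpow]
    obtain ⟨m, hm⟩ := ha₀n₀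
    have hpm : ¬ p ∣ m := by
      intro hdvd
      apply Nat.not_dvd_ordCompl hp hn0
      show p ∣ n₀
      rw [hm]
      exact Dvd.dvd.mul_left hdvd a₀
    have hco : Nat.gcd m (p ^ i) = 1 :=
      (((hp.coprime_iff_not_dvd).mpr hpm).pow_left i).symm
    have hzmem : z ∈ Subgroup.zpowers (z ^ m) := mem_zpowers_pow_of_coprime hco hzp
    have hzm : z ^ m = g ^ (p ^ α * n₀) := by
      rw [hz, ← pow_mul, ← ha'eq, mul_assoc, ← hm]
    rw [hzm] at hzmem
    exact Subgroup.zpowers_le.mpr (pow_mem_power g (p ^ α * n₀)) hzmem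
  · rw [hPa]
    apply power_le_of_dvd
    rw [← ha'eq]
    exact Nat.mul_dvd_mul_left _ ha₀n₀

lemma zpowers_comparable (h : ∀ H : Subgroup G, ∃ m : ℕ, H = powerSubgroup G m)
    {n : ℕ} (hn : ∀ g : G, g ^ n = 1) (hn0 : n ≠ 0)
    {p : ℕ} (hp : p.Prime) {x y : G} (hx : ∃ i, x ^ p ^ i = 1) (hy : ∃ i, y ^ p ^ i = 1) :
    Subgroup.zpowers x ≤ Subgroup.zpowers y ∨ Subgroup.zpowers y ≤ Subgroup.zpowers x := by
  by_cases hx1 : x = 1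
  · left; rw [hx1, Subgroup.zpowers_one_eq_bot]; exact bot_le
  by_cases hy1 : y = 1
  · right; rw [hy1, Subgroup.zpowers_one_eq_bot]; exact bot_le
  obtain ⟨α, hxc⟩ := zpowers_eq_canonical h hn hn0 hp hx hx1
  obtain ⟨β, hyc⟩ := zpowers_eq_canonical h hn hn0 hp hy hy1
  rcases le_total α β with hab | hab
  · right
    rw [hxc, hyc]
    exact power_le_of_dvd (Nat.mul_dvd_mul_right (pow_dvd_pow p hab) _)
  · left
    rw [hxc, hyc]
    exact power_le_of_dvd (Nat.mul_dvd_mul_right (pow_dvd_pow p hab) _)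

lemma commute_of_comparable {x y : G}
    (hc : Subgroup.zpowers x ≤ Subgroup.zpowers y ∨ Subgroup.zpowers y ≤ Subgroup.zpowers x) :
    Commute x y := by
  rcases hc with hc | hc
  · obtain ⟨k, hk⟩ := Subgroup.mem_zpowers_iff.mp (hc (Subgroup.mem_zpowers x))
    rw [← hk]; exact (Commute.refl y).zpow_left k
  · obtain ⟨k, hk⟩ := Subgroup.mem_zpowers_iff.mp (hc (Subgroup.mem_zpowers y))
    rw [← hk]; exact (Commute.refl x).zpow_right k

lemma caseB_comm (h : ∀ H : Subgroup G, ∃ m : ℕ, H = powerSubgroup G m)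
    {n : ℕ} (hn : ∀ g : G, g ^ n = 1) (hn0 : n ≠ 0) (x y : G) : Commute x y := by
  obtain ⟨a, hx⟩ := h (Subgroup.zpowers x)
  obtain ⟨b, hy⟩ := h (Subgroup.zpowers y)
  obtain ⟨c, hc, hcx, hcy⟩ := commutator_props hx hy
  by_cases hc1 : c = 1
  · rw [hc1, one_mul] at hc; exact Commute.symm hc
  exfalso
  have hcn : c ^ n = 1 := hn c
  have hord : orderOf c ∣ n := orderOf_dvd_of_pow_eq_one hcn
  have hcord : orderOf c ≠ 1 := by simpa using hc1
  have hc0 : orderOf c ≠ 0 := by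
    intro h0
    exact (orderOf_eq_zero_iff.mp h0) (isOfFinOrder_iff_pow_eq_one.mpr ⟨n, Nat.pos_of_ne_zero hn0, hcn⟩)
  set p := (orderOf c).minFac with hpdef
  have hp : p.Prime := Nat.minFac_prime hcord
  have hpc : p ∣ orderOf c := Nat.minFac_dvd _
  set γ := n.factorization p with hγ
  set n₀ := ordCompl[p] n with hn₀
  -- x^{n₀}, y^{n₀} are p-elements
  have hmuln : p ^ γ * n₀ = n := Nat.ordProj_mul_ordCompl_eq_self n p
  have hxp : ∃ i, (x ^ n₀) ^ p ^ i = 1 :=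
    ⟨γ, by rw [← pow_mul, mul_comm n₀ (p ^ γ), hmuln]; exact hn x⟩
  have hyp : ∃ i, (y ^ n₀) ^ p ^ i = 1 :=
    ⟨γ, by rw [← pow_mul, mul_comm n₀ (p ^ γ), hmuln]; exact hn y⟩
  have comm' : Commute (x ^ n₀) (y ^ n₀) :=
    commute_of_comparable (zpowers_comparable h hn hn0 hp hxp hyp)
  have hf := comm_formula hc hcx hcy n₀ n₀
  rw [comm'.symm.eq] at hf
  have hcpow : c ^ (n₀ * n₀) = 1 := mul_eq_right.mp hf.symm
  have : p ∣ n₀ * n₀ := hpc.trans (orderOf_dvd_of_pow_eq_one hcpow)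
  have hpn₀ : p ∣ n₀ := (Nat.Prime.dvd_mul hp).mp this |>.elim id id
  exact Nat.not_dvd_ordCompl hp hn0 hpn₀


theorem caseB (h : ∀ H : Subgroup G, ∃ m : ℕ, H = powerSubgroup G m)
    (htor : ∀ g : G, IsOfFinOrder g) : IsCyclic G := by
  classical
  by_cases htriv : ∀ x : G, x = 1
  · refine ⟨⟨1, fun x => Subgroup.mem_zpowers_iff.mpr ⟨0, ?_⟩⟩⟩
    rw [zpow_zero, htriv x]
  push_neg at htriv
  obtain ⟨x₀, hx₀⟩ := htriv
  obtain ⟨a₀, hxa₀⟩ := h (Subgroup.zpowers x₀)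
  have ha₀ : a₀ ≠ 0 := by
    rintro rfl
    rw [power_zero] at hxa₀
    exact hx₀ (Subgroup.zpowers_eq_bot.mp hxa₀)
  have hM₀ : orderOf x₀ ≠ 0 := (htor x₀).orderOf_pos.ne'
  set n := a₀ * orderOf x₀ with hndef
  have hn0 : n ≠ 0 := Nat.mul_ne_zero ha₀ hM₀
  have hn : ∀ g : G, g ^ n = 1 := by
    intro g
    have hmem : g ^ a₀ ∈ Subgroup.zpowers x₀ := hxa₀ ▸ pow_mem_power g a₀
    obtain ⟨k, hk⟩ := Subgroup.mem_zpowers_iff.mp hmem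
    rw [hndef, pow_mul, ← hk, ← zpow_natCast (x₀ ^ k), ← zpow_mul,
      mul_comm k ((orderOf x₀ : ℕ) : ℤ), zpow_mul, zpow_natCast, pow_orderOf_eq_one, one_zpow]
  letI : CommGroup G :=
    { (inferInstance : Group G) with mul_comm := fun a b => (caseB_comm h hn hn0 a b).eq }
  have hexp : Monoid.ExponentExists G := ⟨n, Nat.pos_of_ne_zero hn0, hn⟩
  obtain ⟨g, hg⟩ := Monoid.exists_orderOf_eq_exponent hexp
  have hN0 : Monoid.exponent G ≠ 0 := hexp.exponent_ne_zero
  set N := Monoid.exponent G with hNdef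
  -- p-elements lie in zpowers g
  have pcase : ∀ (p : ℕ), p.Prime → ∀ t : G, (∃ i, t ^ p ^ i = 1) → t ∈ Subgroup.zpowers g := by
    intro p hp t ht
    by_cases ht1 : t = 1
    · rw [ht1]; exact Subgroup.one_mem _
    obtain ⟨i, hti⟩ := ht
    set gp := g ^ (ordCompl[p] N) with hgpdef
    have hgpord : orderOf gp = p ^ N.factorization p := by
      rw [hgpdef, orderOf_pow' g (Nat.ordCompl_pos p hN0).ne', hg,
        Nat.gcd_eq_right (Nat.ordCompl_dvd N p)]
      rw [Nat.div_div_self (Nat.ordProj_dvd N p) hN0]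
    have hgpzg : Subgroup.zpowers gp ≤ Subgroup.zpowers g :=
      Subgroup.zpowers_le.mpr (Subgroup.mem_zpowers_iff.mpr ⟨((N / p ^ N.factorization p : ℕ) : ℤ), by rw [hgpdef, zpow_natCast]⟩)
    have hgpp : ∃ i, gp ^ p ^ i = 1 := by
      refine ⟨N.factorization p, ?_⟩
      rw [← hgpord, pow_orderOf_eq_one]
    rcases zpowers_comparable h hn hn0 hp ⟨i, hti⟩ hgpp with hle | hle
    · exact hgpzg (hle (Subgroup.mem_zpowers t))
    · -- gp ∈ zpowers t with equal p-power orders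
      have hgpt : gp ∈ Subgroup.zpowers t := hle (Subgroup.mem_zpowers gp)
      -- orderOf t = p ^ j
      obtain ⟨j, hjle, hj⟩ := (Nat.dvd_prime_pow hp).mp (orderOf_dvd_of_pow_eq_one hti)
      have hjN : orderOf t ∣ N := Monoid.order_dvd_exponent t
      have hje : j ≤ N.factorization p := by
        rw [← Nat.Prime.pow_dvd_iff_le_factorization hp hN0, ← hj]
        exact hjN
      have hj2 : N.factorization p ≤ j := by
        have hdvd : orderOf gp ∣ orderOf t := orderOf_dvd_of_mem_zpowers hgpt
        rw [hgpord, hj] at hdvd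
        exact (Nat.pow_dvd_pow_iff_le_right hp.one_lt).mp hdvd
      have hordeq : orderOf gp = orderOf t := by rw [hgpord, hj, le_antisymm hje hj2]
      -- gp = t ^ k (natural power)
      have hfin : IsOfFinOrder t := htor t
      obtain ⟨k, hk⟩ := (Submonoid.mem_powers_iff _ _).mp (hfin.mem_powers_iff_mem_zpowers.mpr hgpt)
      have ht0 : orderOf t ≠ 0 := hfin.orderOf_pos.ne'
      have hk0 : k ≠ 0 := by
        rintro rfl
        rw [pow_zero] at hk
        rw [← hk, orderOf_one] at hordeq
        exact ht1 (orderOf_eq_one_iff.mp hordeq.symm)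
      have hgcd : Nat.gcd k (orderOf t) = 1 := by
        have := orderOf_pow' t hk0
        rw [hk, hordeq] at this
        have hg1 : Nat.gcd (orderOf t) k = 1 := by
          rcases (Nat.div_eq_self).mp this.symm with h1 | h1
          · exact absurd h1 ht0
          · exact h1
        rwa [Nat.gcd_comm]
      have : t ∈ Subgroup.zpowers (t ^ k) :=
        mem_zpowers_pow_of_coprime hgcd (pow_orderOf_eq_one t)
      rw [hk] at this
      exact hgpzg this
  -- general element: strong induction on order
  have main : ∀ (M : ℕ) (t : G), orderOf t = M → t ∈ Subgroup.zpowers g := by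
    intro M
    induction M using Nat.strong_induction_on with
    | _ M ih =>
      intro t hMt
      have hM0 : M ≠ 0 := by rw [← hMt]; exact (htor t).orderOf_pos.ne'
      by_cases hM1 : M = 1
      · have : t = 1 := orderOf_eq_one_iff.mp (by rw [hMt, hM1])
        rw [this]; exact Subgroup.one_mem _
      set p := M.minFac with hpdef
      have hp : p.Prime := Nat.minFac_prime hM1
      set k := M.factorization p with hkdef
      set m := ordCompl[p] M with hmdef
      have hMeq : p ^ k * m = M := Nat.ordProj_mul_ordCompl_eq_self M p
      have hm0 : m ≠ 0 := (Nat.ordCompl_pos p hM0).ne'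
      have hpk1 : 1 < p ^ k := by
        have hk1 : 1 ≤ k := by
          rw [hkdef]
          exact (Nat.Prime.factorization_pos_of_dvd hp hM0 (Nat.minFac_dvd M))
        calc 1 < p := hp.one_lt
          _ ≤ p ^ k := Nat.le_self_pow (by omega) p
      have hmM : m < M := by
        calc m < p ^ k * m := by
              have := Nat.pos_of_ne_zero hm0
              calc m = 1 * m := (one_mul m).symm
                _ < p ^ k * m := (Nat.mul_lt_mul_right this).mpr hpk1
          _ = M := hMeq
      have hco : Nat.gcd (p ^ k) m = 1 := (Nat.coprime_ordCompl hp hM0).pow_left k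
      set A := Nat.gcdA (p ^ k) m with hAdef
      set B := Nat.gcdB (p ^ k) m with hBdef
      set X := ((p ^ k : ℕ) : ℤ) * A with hXdef
      set Y := ((m : ℕ) : ℤ) * B with hYdef
      have hXY : X + Y = 1 := by
        rw [hXdef, hYdef]
        have := Nat.gcd_eq_gcd_ab (p ^ k) m
        rw [hco] at this
        push_cast at this ⊢
        linarith
      have hsplit : t = t ^ X * t ^ Y := by rw [← zpow_add, hXY, zpow_one]
      have htM : t ^ (M : ℤ) = 1 := by
        rw [zpow_natCast, ← hMt, pow_orderOf_eq_one]
      have ht2 : (t ^ Y) ^ p ^ k = 1 := by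
        rw [← zpow_natCast (t ^ Y), ← zpow_mul]
        have : Y * ((p ^ k : ℕ) : ℤ) = (M : ℤ) * B := by
          rw [hYdef, ← hMeq]; push_cast; ring
        rw [this, zpow_mul, htM, one_zpow]
      have ht1m : (t ^ X) ^ m = 1 := by
        rw [← zpow_natCast (t ^ X), ← zpow_mul]
        have : X * ((m : ℕ) : ℤ) = (M : ℤ) * A := by
          rw [hXdef, ← hMeq]; push_cast; ring
        rw [this, zpow_mul, htM, one_zpow]
      have hord1 : orderOf (t ^ X) ≤ m :=
        Nat.le_of_dvd (Nat.pos_of_ne_zero hm0) (orderOf_dvd_of_pow_eq_one ht1m)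
      have hmem1 : t ^ X ∈ Subgroup.zpowers g :=
        ih (orderOf (t ^ X)) (lt_of_le_of_lt hord1 hmM) (t ^ X) rfl
      have hmem2 : t ^ Y ∈ Subgroup.zpowers g := pcase p hp (t ^ Y) ⟨k, ht2⟩
      rw [hsplit]
      exact mul_mem hmem1 hmem2
  exact ⟨⟨g, fun t => main (orderOf t) t rfl⟩⟩

end PowerAux

theorem cyclic_of_all_subgroups_power {G : Type*} [Group G]
    (h : ∀ H : Subgroup G, ∃ m : ℕ, H = powerSubgroup G m) : IsCyclic G := by
  by_cases hfin : ∀ g : G, IsOfFinOrder g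
  · exact PowerAux.caseB h hfin
  · push_neg at hfin
    obtain ⟨g0, hg0⟩ := hfin
    exact PowerAux.caseA h g0 hg0
end

section
/- If G is a torsion abelian group with only finitely many non-power subgroups, then the set π(G) of primes dividing orders of elements of G is finite. -/
theorem pi_finite_of_torsion_abelian {G : Type*} [CommGroup G]
    (htor : ∀ g : G, IsOfFinOrder g)
    (h : {H : Subgroup G | ∀ m : ℕ, H ≠ powerSubgroup G m}.Finite) :
    {p : ℕ | p.Prime ∧ ∃ g : G, orderOf g = p}.Finite := by
  by_contra hinf
  rw [← Set.not_infinite, not_not] at hinf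
  set S := {p : ℕ | p.Prime ∧ ∃ g : G, orderOf g = p} with hS
  classical
  let g : ℕ → G := fun p => if h : ∃ x : G, orderOf x = p then h.choose else 1
  have hg : ∀ p ∈ S, orderOf (g p) = p := by
    intro p hp
    simp only [g, dif_pos hp.2]
    exact hp.2.choose_spec
  let f : ℕ → Subgroup G := fun p => Subgroup.zpowers (g p)
  -- f maps S into the set of non-power subgroups
  have hmem : ∀ p ∈ S, f p ∈ {H : Subgroup G | ∀ m : ℕ, H ≠ powerSubgroup G m} := by
    intro p hp m heq
    rcases Nat.eq_zero_or_pos m with rfl | hm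
    · have h1 : powerSubgroup G 0 = ⊥ := by
        unfold powerSubgroup
        simp [Set.range_const]
      rw [h1] at heq
      have : g p ∈ (⊥ : Subgroup G) := heq ▸ Subgroup.mem_zpowers (g p)
      rw [Subgroup.mem_bot] at this
      have h2 := hg p hp
      rw [this, orderOf_one] at h2
      exact hp.1.one_lt.ne' h2.symm
    · -- pick a prime q in S, q ≠ p, q ∤ m
      have hfin : ({p} ∪ {q : ℕ | q ∣ m} : Set ℕ).Finite := by
        apply (Set.finite_singleton p).union
        apply Set.Finite.subset (Set.finite_Icc 1 m)
        intro q hq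
        exact Set.mem_Icc.2 ⟨Nat.one_le_iff_ne_zero.2 (by rintro rfl; simp at hq; omega),
          Nat.le_of_dvd hm hq⟩
      obtain ⟨q, hqS, hqbad⟩ := (hinf.diff hfin).nonempty
      have hq1 : q ≠ p := fun hqp => hqbad (Or.inl hqp)
      have hq2 : ¬ q ∣ m := fun hd => hqbad (Or.inr hd)
      have hqprime : q.Prime := hqS.1
      have hgq : orderOf (g q) = q := hg q hqS
      have hcop : Nat.Coprime (orderOf (g q)) m := by
        rw [hgq]; exact hqprime.coprime_iff_not_dvd.2 hq2
      have hmemq : g q ^ m ∈ powerSubgroup G m :=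
        Subgroup.subset_closure ⟨g q, rfl⟩
      rw [← heq] at hmemq
      have hdvd : orderOf (g q ^ m) ∣ orderOf (g p) := orderOf_dvd_of_mem_zpowers hmemq
      rw [hcop.orderOf_pow, hgq, hg p hp] at hdvd
      exact hq1 ((Nat.prime_dvd_prime_iff_eq hqprime hp.1).1 hdvd)
  have hinj : Set.InjOn f S := by
    intro p hp q hq hfeq
    have h1 : g p ∈ Subgroup.zpowers (g q) := by
      have := Subgroup.mem_zpowers (g p); rwa [show Subgroup.zpowers (g p) = f p from rfl, hfeq] at this
    have h2 : g q ∈ Subgroup.zpowers (g p) := by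
      have := Subgroup.mem_zpowers (g q); rwa [show Subgroup.zpowers (g q) = f q from rfl, ← hfeq] at this
    have d1 := orderOf_dvd_of_mem_zpowers h1
    have d2 := orderOf_dvd_of_mem_zpowers h2
    rw [hg p hp, hg q hq] at d1
    exact Nat.dvd_antisymm d1 (by rw [hg p hp, hg q hq] at d2; exact d2)
  have himg : f '' S ⊆ {H : Subgroup G | ∀ m : ℕ, H ≠ powerSubgroup G m} := by
    rintro _ ⟨p, hp, rfl⟩; exact hmem p hp
  exact (h.subset himg).not_infinite (hinf.image hinj)
end

section
/- Let G be a group with only finitely many non-power subgroups, and suppose G is torsion-free (no nontrivial elements of finite order). Then every nontrivial subgroup H of G contains a nontrivial subgroup which is a power subgroup of G, or H is itself a power subgroup of G. -/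
theorem torsionfree_subgroup_contains_power_subgroup {G : Type*} [Group G]
    (htf : ∀ g : G, g ≠ 1 → ¬IsOfFinOrder g)
    (h : {H : Subgroup G | ∀ m : ℕ, H ≠ powerSubgroup G m}.Finite) :
    ∀ H : Subgroup G, H ≠ ⊥ →
      (∃ K : Subgroup G, K ≠ ⊥ ∧ K ≤ H ∧ ∃ m : ℕ, K = powerSubgroup G m) ∨
        (∃ m : ℕ, H = powerSubgroup G m) := by
  intro H hH
  left
  -- pick a nontrivial element of H
  obtain ⟨g, hgH, hg1⟩ : ∃ g ∈ H, g ≠ 1 := by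
    by_contra hc
    push_neg at hc
    exact hH (Subgroup.eq_bot_iff_forall H |>.mpr hc)
  have hinj : Function.Injective fun n : ℤ => g ^ n :=
    injective_zpow_iff_not_isOfFinOrder.mpr (htf g hg1)
  -- the map n ↦ zpowers (g^(n+1)) is injective
  have key : Function.Injective fun n : ℕ => Subgroup.zpowers (g ^ (n + 1 : ℤ)) := by
    intro a b hab
    simp only at hab
    have ha : g ^ (a + 1 : ℤ) ∈ Subgroup.zpowers (g ^ (b + 1 : ℤ)) := by
      rw [← hab]; exact Subgroup.mem_zpowers _
    have hb : g ^ (b + 1 : ℤ) ∈ Subgroup.zpowers (g ^ (a + 1 : ℤ)) := by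
      rw [hab]; exact Subgroup.mem_zpowers _
    obtain ⟨k, hk⟩ := ha
    obtain ⟨l, hl⟩ := hb
    have hk' : (b + 1 : ℤ) * k = a + 1 := hinj (show g ^ ((b+1:ℤ)*k) = g ^ (a+1:ℤ) by
      rw [zpow_mul]; exact hk)
    have hl' : (a + 1 : ℤ) * l = b + 1 := hinj (show g ^ ((a+1:ℤ)*l) = g ^ (b+1:ℤ) by
      rw [zpow_mul]; exact hl)
    have ha0 : (0:ℤ) < a + 1 := by positivity
    have hb0 : (0:ℤ) < b + 1 := by positivity
    have h1 : (a + 1 : ℤ) * (l * k) = (a + 1) * 1 := by rw [← mul_assoc, hl', hk', mul_one]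
    have hlk : l * k = 1 := mul_left_cancel₀ (by positivity) h1
    have hkpos : 0 < k := by nlinarith
    have hlpos : 0 < l := by nlinarith
    have hk1 : k = 1 := by nlinarith
    rw [hk1, mul_one] at hk'
    omega
  -- so the range is infinite; it can't be contained in the finite set of non-power subgroups
  have hinf : ¬ (Set.range fun n : ℕ => Subgroup.zpowers (g ^ (n + 1 : ℤ))).Finite :=
    Set.infinite_range_of_injective key
  have : ¬ (Set.range fun n : ℕ => Subgroup.zpowers (g ^ (n + 1 : ℤ)))
      ⊆ {H : Subgroup G | ∀ m : ℕ, H ≠ powerSubgroup G m} := by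
    intro hsub
    exact hinf (h.subset hsub)
  rw [Set.not_subset] at this
  obtain ⟨K, ⟨n, rfl⟩, hK⟩ := this
  simp only [Set.mem_setOf_eq, not_forall, not_ne_iff] at hK
  obtain ⟨m, hm⟩ := hK
  refine ⟨_, ?_, ?_, m, hm⟩
  · simp only [ne_eq, Subgroup.zpowers_eq_bot]
    intro hgg
    have : (n + 1 : ℤ) = 0 := hinj (a₂ := 0) (by simpa using hgg)
    omega
  · rw [Subgroup.zpowers_le]
    exact H.zpow_mem hgH _
end

section
/- Let G = T × ⟨z⟩ where T is a finite abelian group with |T| = s > 1 and z has infinite order. Then for each integer n ≥ 2, the subgroup T × ⟨z^{sn}⟩ is a non-power subgroup of G; in particular G has infinitely many non-power subgroups. -/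
lemma mem_powerSubgroup_iff {G : Type*} [CommGroup G] (m : ℕ) {x : G} :
    x ∈ powerSubgroup G m ↔ ∃ g : G, g ^ m = x := by
  constructor
  · intro hx
    refine Subgroup.closure_induction ?_ ?_ ?_ ?_ hx
    · rintro _ ⟨g, rfl⟩; exact ⟨g, rfl⟩
    · exact ⟨1, one_pow m⟩
    · rintro _ _ _ _ ⟨a, rfl⟩ ⟨b, rfl⟩; exact ⟨a * b, mul_pow a b m⟩
    · rintro _ _ ⟨a, rfl⟩; exact ⟨a⁻¹, inv_pow a m⟩
  · rintro ⟨g, rfl⟩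
    exact Subgroup.subset_closure ⟨g, rfl⟩

lemma key_nonpower {T : Type*} [CommGroup T] [Finite T] (hs : 1 < Nat.card T)
    (j : ℕ) (hj : Nat.card T ∣ j) (m : ℕ) :
    (⊤ : Subgroup T).prod
        (Subgroup.zpowers ((Multiplicative.ofAdd (1 : ℤ)) ^ j)) ≠
      powerSubgroup (T × Multiplicative ℤ) m := by
  intro hEq
  set z : Multiplicative ℤ := Multiplicative.ofAdd (1 : ℤ) with hz
  -- (1, z)^m is an m-th power, so it lies in the product subgroup
  have h1 : ((1, z) : T × Multiplicative ℤ) ^ m ∈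
      (⊤ : Subgroup T).prod (Subgroup.zpowers (z ^ j)) := by
    rw [hEq]
    exact (mem_powerSubgroup_iff m).2 ⟨(1, z), rfl⟩
  rw [Subgroup.mem_prod] at h1
  obtain ⟨-, h2⟩ := h1
  have h2' : z ^ m ∈ Subgroup.zpowers (z ^ j) := by simpa using h2
  obtain ⟨k, hk⟩ := Subgroup.mem_zpowers_iff.1 h2'
  -- translate to integers : j * k = m
  have hk' : (j : ℤ) * k = (m : ℤ) := by
    have := congrArg Multiplicative.toAdd hk
    simpa [hz, mul_comm] using this
  have hjm : (j : ℤ) ∣ (m : ℤ) := ⟨k, hk'.symm⟩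
  have hjm' : j ∣ m := Int.ofNat_dvd.mp (by exact_mod_cast hjm)
  have hsm : Nat.card T ∣ m := dvd_trans hj hjm'
  -- every element of T raised to m is 1
  have hpow : ∀ u : T, u ^ m = 1 := by
    intro u
    obtain ⟨c, rfl⟩ := hsm
    rw [pow_mul]
    simp [pow_card_eq_one']
  -- pick a nontrivial element of T
  have : Nontrivial T := Finite.one_lt_card_iff_nontrivial.mp hs
  obtain ⟨t, ht⟩ := exists_ne (1 : T)
  have hmem : ((t, 1) : T × Multiplicative ℤ) ∈
      (⊤ : Subgroup T).prod (Subgroup.zpowers (z ^ j)) :=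
    Subgroup.mem_prod.2 ⟨Subgroup.mem_top t, one_mem _⟩
  rw [hEq] at hmem
  obtain ⟨⟨u, w⟩, hg⟩ := (mem_powerSubgroup_iff m).1 hmem
  have : u ^ m = t := congrArg Prod.fst hg
  rw [hpow u] at this
  exact ht this.symm

theorem nonpower_subgroups_of_T_times_Z {T : Type*} [CommGroup T] [Finite T]
    (hs : 1 < Nat.card T) :
    (∀ n : ℕ, 2 ≤ n → ∀ m : ℕ,
        (⊤ : Subgroup T).prod
            (Subgroup.zpowers ((Multiplicative.ofAdd (1 : ℤ)) ^ (Nat.card T * n))) ≠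
          powerSubgroup (T × Multiplicative ℤ) m) ∧
      {H : Subgroup (T × Multiplicative ℤ) |
        ∀ m : ℕ, H ≠ powerSubgroup (T × Multiplicative ℤ) m}.Infinite := by
  set s := Nat.card T with hsdef
  set z : Multiplicative ℤ := Multiplicative.ofAdd (1 : ℤ) with hz
  have hspos : 0 < s := by omega
  constructor
  · intro n _ m
    exact key_nonpower hs (s * n) ⟨n, rfl⟩ m
  · apply Set.infinite_of_injective_forall_mem
      (f := fun n : ℕ => (⊤ : Subgroup T).prod (Subgroup.zpowers (z ^ (s * (n + 2)))))
    · intro a b hab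
      have haux : ∀ a b : ℕ,
          (⊤ : Subgroup T).prod (Subgroup.zpowers (z ^ (s * (a + 2)))) =
            (⊤ : Subgroup T).prod (Subgroup.zpowers (z ^ (s * (b + 2)))) →
          (b + 2) ∣ (a + 2) := by
        intro a b h
        have hmem : ((1, z ^ (s * (a + 2))) : T × Multiplicative ℤ) ∈
            (⊤ : Subgroup T).prod (Subgroup.zpowers (z ^ (s * (a + 2)))) :=
          Subgroup.mem_prod.2 ⟨Subgroup.mem_top _, Subgroup.mem_zpowers _⟩
        rw [h, Subgroup.mem_prod] at hmem
        obtain ⟨-, h2⟩ := hmem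
        obtain ⟨k, hk⟩ := Subgroup.mem_zpowers_iff.1 h2
        have hk' : ((s : ℤ) * (b + 2)) * k = (s : ℤ) * (a + 2) := by
          have := congrArg Multiplicative.toAdd hk
          simpa [hz, mul_comm] using this
        have hdvd : ((b + 2 : ℕ) : ℤ) ∣ ((a + 2 : ℕ) : ℤ) := by
          refine ⟨k, ?_⟩
          have hs0 : (s : ℤ) ≠ 0 := by exact_mod_cast hspos.ne'
          have : (s : ℤ) * ((a : ℤ) + 2) = (s : ℤ) * (((b : ℤ) + 2) * k) := by
            rw [← hk']; ring
          have := mul_left_cancel₀ hs0 this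
          push_cast
          linarith
        exact_mod_cast hdvd
      have h1 := haux a b hab
      have h2 := haux b a hab.symm
      have := Nat.dvd_antisymm h2 h1
      omega
    · intro n m
      exact key_nonpower hs (s * (n + 2)) ⟨n + 2, rfl⟩ m
end

section
/- Let G be a group with only finitely many non-power subgroups H_1, ..., H_s (s ≥ 1), and suppose every non-power subgroup has finitely many conjugates. Then K = ⋂_{i=1}^s ⋂_{g ∈ G} g⁻¹ N_G(H_i) g is a normal subgroup of finite index in G in which every subgroup is normal (K is a Dedekind group). -/
section Aux

variable {G : Type*} [Group G]

lemma powerSubgroup_normal (m : ℕ) : (powerSubgroup G m).Normal := by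
  constructor
  intro n hn g
  have hle : (powerSubgroup G m).map (MulAut.conj g).toMonoidHom ≤ powerSubgroup G m := by
    rw [powerSubgroup, MonoidHom.map_closure]
    apply Subgroup.closure_mono
    rintro _ ⟨_, ⟨x, rfl⟩, rfl⟩
    exact ⟨MulAut.conj g x, (map_pow (MulAut.conj g) x m).symm⟩
  exact hle ⟨n, hn, rfl⟩

lemma mem_map_conj_iff {A : Subgroup G} {g x : G} :
    x ∈ A.map (MulAut.conj g).toMonoidHom ↔ g⁻¹ * x * g ∈ A := by
  rw [Subgroup.mem_map_equiv, MulAut.conj_symm_apply]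

lemma map_conj_eq_self {A : Subgroup G} {n : G} (hn : n ∈ Subgroup.normalizer (A : Set G)) :
    A.map (MulAut.conj n).toMonoidHom = A := by
  ext x
  rw [mem_map_conj_iff]
  exact (Subgroup.mem_normalizer_iff''.mp hn x).symm

lemma map_conj_mul (A : Subgroup G) (a b : G) :
    A.map (MulAut.conj (a * b)).toMonoidHom
      = (A.map (MulAut.conj b).toMonoidHom).map (MulAut.conj a).toMonoidHom := by
  ext x
  simp only [mem_map_conj_iff, mul_inv_rev, mul_assoc]

lemma conj_eq_iff_mem_normalizer {A : Subgroup G} (a b : G) :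
    a⁻¹ * b ∈ Subgroup.normalizer (A : Set G) ↔
      A.map (MulAut.conj a).toMonoidHom = A.map (MulAut.conj b).toMonoidHom := by
  constructor
  · intro hab
    have hb : b = a * (a⁻¹ * b) := by group
    rw [hb, map_conj_mul, map_conj_eq_self hab]
  · intro hmap
    rw [Subgroup.mem_normalizer_iff'']
    intro x
    have h1 : a * x * a⁻¹ ∈ A.map (MulAut.conj a).toMonoidHom ↔ x ∈ A := by
      rw [mem_map_conj_iff]
      constructor
      · intro h; simpa [mul_assoc] using h
      · intro h; simpa [mul_assoc] using h
    have h2 : a * x * a⁻¹ ∈ A.map (MulAut.conj b).toMonoidHom ↔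
        (a⁻¹ * b)⁻¹ * x * (a⁻¹ * b) ∈ A := by
      have e : (a⁻¹ * b)⁻¹ * x * (a⁻¹ * b) = b⁻¹ * (a * x * a⁻¹) * b := by group
      rw [mem_map_conj_iff, e]
    rw [← h1, hmap, h2]

lemma normalizer_finiteIndex {A : Subgroup G}
    (h : {L : Subgroup G | ∃ g : G, L = A.map (MulAut.conj g).toMonoidHom}.Finite) :
    (Subgroup.normalizer (A : Set G)).FiniteIndex := by
  have : Finite (G ⧸ Subgroup.normalizer (A : Set G)) := by
    have := h.to_subtype
    refine Finite.of_injective (fun q : G ⧸ Subgroup.normalizer (A : Set G) =>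
      (Quotient.liftOn' q
        (fun g => (⟨A.map (MulAut.conj g).toMonoidHom, g, rfl⟩ :
          {L : Subgroup G | ∃ g : G, L = A.map (MulAut.conj g).toMonoidHom}))
        (fun a b hab => Subtype.ext
          ((conj_eq_iff_mem_normalizer a b).mp (QuotientGroup.leftRel_apply.mp hab))))) ?_
    intro q1 q2
    refine Quotient.inductionOn₂' q1 q2 fun a b hEq => ?_
    exact Quotient.sound' (QuotientGroup.leftRel_apply.mpr
      ((conj_eq_iff_mem_normalizer _ _).mpr (congrArg Subtype.val hEq)))
  exact @Subgroup.finiteIndex_of_finite_quotient G _ (Subgroup.normalizer (A : Set G)) this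

end Aux

theorem dedekind_kernel_of_finitely_many_nonpower {G : Type*} [Group G]
    (s : ℕ) (hs : 1 ≤ s) (H : Fin s → Subgroup G)
    (hH : ∀ K : Subgroup G, (∀ m : ℕ, K ≠ powerSubgroup G m) ↔ ∃ i, K = H i)
    (hconj : ∀ i, {L : Subgroup G |
        ∃ g : G, L = (H i).map (MulAut.conj g).toMonoidHom}.Finite) :
    (⨅ i, ⨅ g : G, (Subgroup.normalizer (H i)).map (MulAut.conj g⁻¹).toMonoidHom).Normal ∧
      (⨅ i, ⨅ g : G,
          (Subgroup.normalizer (H i)).map (MulAut.conj g⁻¹).toMonoidHom).FiniteIndex ∧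
      ∀ L : Subgroup ↥
          (⨅ i, ⨅ g : G, (Subgroup.normalizer (H i)).map (MulAut.conj g⁻¹).toMonoidHom),
        L.Normal := by
  set K : Subgroup G :=
    ⨅ i, ⨅ g : G, (Subgroup.normalizer (H i)).map (MulAut.conj g⁻¹).toMonoidHom with hKdef
  -- membership characterization of K
  have memK : ∀ x : G, x ∈ K ↔ ∀ (i : Fin s) (g : G), g * x * g⁻¹ ∈ Subgroup.normalizer (H i : Set G) := by
    intro x
    rw [hKdef]
    simp only [Subgroup.mem_iInf, mem_map_conj_iff, inv_inv]
  -- K is contained in the normalizer of every subgroup of G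
  have key : ∀ M : Subgroup G, K ≤ Subgroup.normalizer (M : Set G) := by
    intro M
    by_cases hM : ∃ m, M = powerSubgroup G m
    · obtain ⟨m, rfl⟩ := hM
      rw [Subgroup.normalizer_eq_top_iff.mpr (powerSubgroup_normal m)]
      exact le_top
    · push_neg at hM
      obtain ⟨i, rfl⟩ := (hH M).mp hM
      intro x hx
      simpa using (memK x).mp hx i 1
  refine ⟨?_, ?_, ?_⟩
  · -- normality
    constructor
    intro n hn g
    rw [memK] at hn ⊢
    intro i h
    have e : h * (g * n * g⁻¹) * h⁻¹ = (h * g) * n * (h * g)⁻¹ := by group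
    rw [e]
    exact hn i (h * g)
  · -- finite index
    have hKeq : K = ⨅ i, (Subgroup.normalizer (H i : Set G)).normalCore := by
      ext x
      rw [memK, Subgroup.mem_iInf]
      constructor
      · intro hx i
        exact fun b => hx i b
      · intro hx i g
        exact hx i g
    rw [hKeq]
    have hNorm : ∀ i, (Subgroup.normalizer (H i : Set G)).FiniteIndex := fun i => normalizer_finiteIndex (hconj i)
    exact Subgroup.finiteIndex_iInf fun i => @Subgroup.finiteIndex_normalCore _ _ _ (hNorm i)
  · -- Dedekind
    intro L
    constructor
    intro n hn x
    have hx : (x : G) ∈ Subgroup.normalizer ((L.map K.subtype : Subgroup G) : Set G) := key (L.map K.subtype) x.2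
    have hmem : (x : G) * (n : G) * (x : G)⁻¹ ∈ L.map K.subtype :=
      (Subgroup.mem_normalizer_iff.mp hx (n : G)).mp ⟨n, hn, rfl⟩
    have hcoe : (((x * n * x⁻¹ : ↥K) : G)) = (x : G) * (n : G) * (x : G)⁻¹ := by
      push_cast; rfl
    rw [← hcoe] at hmem
    exact (Subgroup.mem_map_iff_mem K.subtype_injective).mp hmem
end

section
/- Let G be a group with infinite cyclic subgroup Z = ⟨x⟩ normal in G, and let y ∈ G satisfy y⁻¹xy = x⁻¹ with x ≠ x⁻¹. Then the subgroups Y_i = ⟨x^{-i} y x^i⟩ for i = 1, 2, ... are pairwise distinct; hence G has infinitely many distinct conjugates of ⟨y⟩. -/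
theorem conjugates_pairwise_distinct {G : Type*} [Group G] (x y : G)
    (hx : ¬IsOfFinOrder x) (hZ : (Subgroup.zpowers x).Normal)
    (hy : y⁻¹ * x * y = x⁻¹) (hxx : x ≠ x⁻¹) :
    Function.Injective
        (fun i : ℕ => Subgroup.zpowers ((x ^ (i : ℤ))⁻¹ * y * x ^ (i : ℤ))) ∧
      {K : Subgroup G |
        ∃ g : G, K = (Subgroup.zpowers y).map (MulAut.conj g).toMonoidHom}.Infinite := by
  -- conjugation by y inverts powers of x
  have hyx : ∀ b : ℤ, y⁻¹ * x ^ b * y = x ^ (-b) := by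
    intro b
    have : (MulAut.conj y⁻¹) (x ^ b) = ((MulAut.conj y⁻¹) x) ^ b := map_zpow _ _ _
    simpa [MulAut.conj_apply, mul_assoc, hy, zpow_neg, inv_zpow] using this
  have hyx' : ∀ b : ℤ, y * x ^ b * y⁻¹ = x ^ (-b) := by
    intro b
    have := hyx (-b)
    rw [neg_neg] at this
    calc y * x ^ b * y⁻¹ = y * (y⁻¹ * x ^ (-b) * y) * y⁻¹ := by rw [this]
    _ = x ^ (-b) := by group
  -- key cancellation: a power of x equal to a power of (x^(-j) y x^j)-commuting
  -- element forces the exponent to vanish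
  have key : ∀ i j : ℤ,
      Subgroup.zpowers ((x ^ i)⁻¹ * y * x ^ i)
        = Subgroup.zpowers ((x ^ j)⁻¹ * y * x ^ j) → i = j := by
    intro i j hK
    set gi := (x ^ i)⁻¹ * y * x ^ i with hgi
    set gj := (x ^ j)⁻¹ * y * x ^ j with hgj
    have hmem : gi ∈ Subgroup.zpowers gj := by
      rw [← hK]; exact Subgroup.mem_zpowers _
    obtain ⟨m, hm⟩ := hmem
    -- a := gj⁻¹ * gi = x ^ (2*(i-j))
    have ha : gj⁻¹ * gi = x ^ (2 * (i - j)) := by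
      have h1 : gj⁻¹ * gi = (x ^ j)⁻¹ * (y⁻¹ * x ^ (j - i) * y) * x ^ i := by
        rw [hgi, hgj]; group
      rw [h1, hyx (j - i), ← zpow_neg, ← zpow_add, ← zpow_add]
      ring_nf
    -- gj commutes with gj⁻¹ * gi since the latter is a power of gj
    have hcomm : gj * (gj⁻¹ * gi) * gj⁻¹ = gj⁻¹ * gi := by
      rw [← hm]
      group
    -- but gj conjugates x^b to x^(-b)
    have hconj : gj * x ^ (2 * (i - j)) * gj⁻¹ = x ^ (-(2 * (i - j))) := by
      rw [hgj]
      have h2 : x ^ (j : ℤ) * x ^ (2 * (i - j)) * (x ^ (j : ℤ))⁻¹ = x ^ (2 * (i - j)) := by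
        rw [← zpow_neg, ← zpow_add, ← zpow_add]; ring_nf
      calc (x ^ j)⁻¹ * y * x ^ j * x ^ (2 * (i - j)) * ((x ^ j)⁻¹ * y * x ^ j)⁻¹
          = (x ^ j)⁻¹ * (y * (x ^ j * x ^ (2 * (i - j)) * (x ^ j)⁻¹) * y⁻¹) * x ^ j := by
            group
        _ = (x ^ j)⁻¹ * (y * x ^ (2 * (i - j)) * y⁻¹) * x ^ j := by rw [h2]
        _ = (x ^ j)⁻¹ * x ^ (-(2 * (i - j))) * x ^ j := by rw [hyx' (2 * (i - j))]
        _ = x ^ (-(2 * (i - j))) := by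
            rw [← zpow_neg, ← zpow_add, ← zpow_add]; ring_nf
    have hx4 : x ^ (4 * (i - j)) = 1 := by
      have : x ^ (2 * (i - j)) = x ^ (-(2 * (i - j))) := by
        rw [← hconj, ← ha, hcomm, ha]
      have h4 : x ^ (2 * (i - j)) * x ^ (2 * (i - j)) = 1 := by
        nth_rewrite 2 [this]
        rw [← zpow_add]; ring_nf; simp
      rw [← zpow_add] at h4
      convert h4 using 2
      ring
    by_contra hne
    exact hx (isOfFinOrder_iff_zpow_eq_one.mpr
      ⟨4 * (i - j), by omega, hx4⟩)
  have hinj : Function.Injective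
      (fun i : ℕ => Subgroup.zpowers ((x ^ (i : ℤ))⁻¹ * y * x ^ (i : ℤ))) := by
    intro i j h
    have := key (i : ℤ) (j : ℤ) (by simpa using h)
    exact_mod_cast this
  refine ⟨hinj, ?_⟩
  apply Set.infinite_of_injective_forall_mem
    (f := fun i : ℕ => Subgroup.zpowers ((x ^ (i : ℤ))⁻¹ * y * x ^ (i : ℤ))) hinj
  intro i
  refine ⟨(x ^ (i : ℤ))⁻¹, ?_⟩
  rw [MonoidHom.map_zpowers]
  simp only [MulEquiv.coe_toMonoidHom, MulAut.conj_apply, inv_inv]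
end

section
/- If G is a non-cyclic group, then G is finite if and only if G has only finitely many non-power subgroups. -/
namespace NP
open Subgroup

variable {G : Type*} [Group G]

theorem mem_power (x : G) (m : ℕ) : x ^ m ∈ powerSubgroup G m :=
  Subgroup.subset_closure ⟨x, rfl⟩

theorem power_normal (m : ℕ) : (powerSubgroup G m).Normal := by
  constructor
  intro n hn g
  have h1 : Subgroup.map (MulAut.conj g).toMonoidHom (powerSubgroup G m) ≤ powerSubgroup G m := by
    rw [powerSubgroup, MonoidHom.map_closure]
    apply Subgroup.closure_le _ |>.mpr
    rintro y ⟨-, ⟨x, rfl⟩, rfl⟩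
    simpa [powerSubgroup] using mem_power (g * x * g⁻¹) m
  have h2 : g * n * g⁻¹ = (MulAut.conj g).toMonoidHom n := by simp
  rw [h2]
  exact h1 ⟨n, hn, rfl⟩

theorem power_le_of_dvd {m k : ℕ} (h : m ∣ k) : powerSubgroup G k ≤ powerSubgroup G m := by
  apply Subgroup.closure_le _ |>.mpr
  rintro y ⟨x, rfl⟩
  obtain ⟨c, rfl⟩ := h
  show x ^ (m * c) ∈ (powerSubgroup G m : Set G)
  rw [mul_comm, pow_mul]
  exact mem_power (x ^ c) m

theorem power_zero : powerSubgroup (G := G) 0 = ⊥ := by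
  apply le_antisymm _ bot_le
  apply Subgroup.closure_le _ |>.mpr
  rintro y ⟨x, rfl⟩
  simp

theorem power_gcd {e : ℕ} (hexp : ∀ x : G, x ^ e = 1) (m : ℕ) :
    powerSubgroup G m = powerSubgroup G (Nat.gcd m e) := by
  apply le_antisymm (power_le_of_dvd (Nat.gcd_dvd_left m e))
  apply Subgroup.closure_le _ |>.mpr
  rintro y ⟨x, rfl⟩
  have hb : ((Nat.gcd m e : ℤ)) = m * Nat.gcdA m e + e * Nat.gcdB m e := Nat.gcd_eq_gcd_ab m e
  have : x ^ (Nat.gcd m e) = (x ^ m) ^ (Nat.gcdA m e) * (x ^ e) ^ (Nat.gcdB m e) := by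
    rw [← zpow_natCast x (Nat.gcd m e), hb, zpow_add, zpow_mul, zpow_mul, zpow_natCast, zpow_natCast]
  show x ^ Nat.gcd m e ∈ (powerSubgroup G m : Set G)
  rw [this, hexp x]
  simpa using zpow_mem (mem_power x m) (Nat.gcdA m e)

theorem map_power {H : Type*} [Group H] (f : G →* H) (hf : Function.Surjective f) (m : ℕ) :
    (powerSubgroup G m).map f = powerSubgroup H m := by
  rw [powerSubgroup, MonoidHom.map_closure]
  congr 1
  ext y
  constructor
  · rintro ⟨-, ⟨x, rfl⟩, rfl⟩; exact ⟨f x, by rw [map_pow]⟩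
  · rintro ⟨x, rfl⟩
    obtain ⟨z, rfl⟩ := hf x
    exact ⟨z ^ m, ⟨z, rfl⟩, by rw [map_pow]⟩

/-- The set of non-power subgroups. -/
def NPS (G : Type*) [Group G] : Set (Subgroup G) :=
  {H : Subgroup G | ∀ m : ℕ, H ≠ powerSubgroup G m}

theorem nps_quotient (N : Subgroup G) [N.Normal] (hS : (NPS G).Finite) :
    (NPS (G ⧸ N)).Finite := by
  have hsurj : Function.Surjective (QuotientGroup.mk' N) := QuotientGroup.mk'_surjective N
  apply Set.Finite.of_finite_image (f := Subgroup.comap (QuotientGroup.mk' N))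
  · apply hS.subset
    rintro - ⟨K, hK, rfl⟩
    intro m hm
    apply hK m
    rw [← Subgroup.map_comap_eq_self_of_surjective hsurj K, hm, map_power _ hsurj]
  · exact (Subgroup.comap_injective hsurj).injOn

theorem finite_zpowers_set {g : G} (hg : IsOfFinOrder g) : (zpowers g : Set G).Finite := by
  rw [← hg.powers_eq_zpowers]
  exact hg.finite_powers

theorem zpowers_pow_inj {g : G} (hg : ¬IsOfFinOrder g) {a b : ℕ} (ha : 1 ≤ a) (hb : 1 ≤ b)
    (h : zpowers (g ^ a) = zpowers (g ^ b)) : a = b := by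
  have hinj : Function.Injective fun n : ℤ => g ^ n := injective_zpow_iff_not_isOfFinOrder.mpr hg
  have key : ∀ p q : ℕ, zpowers (g ^ p) ≤ zpowers (g ^ q) → ∃ c : ℤ, (q : ℤ) * c = p := by
    intro p q hle
    obtain ⟨c, hc'⟩ := hle (mem_zpowers (g ^ p))
    have hc : (g ^ q : G) ^ c = g ^ p := hc'
    refine ⟨c, hinj ?_⟩
    show g ^ ((q : ℤ) * c) = g ^ (p : ℤ)
    rw [zpow_mul, zpow_natCast, hc, zpow_natCast]
  obtain ⟨c, hc⟩ := key a b h.le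
  obtain ⟨d, hd⟩ := key b a h.ge
  have : (a : ℤ) * (d * c) = (a : ℤ) * 1 := by
    rw [mul_one, ← mul_assoc, hd, hc]
  have hdc : d * c = 1 := by
    have ha' : (a : ℤ) ≠ 0 := by positivity
    exact mul_left_cancel₀ ha' this
  have : c = 1 ∨ c = -1 := Int.isUnit_iff.mp (IsUnit.of_mul_eq_one (a := c) d (by linarith [mul_comm c d, hdc]))
  rcases this with rfl | rfl
  · have : (b : ℤ) = a := by simpa using hc
    exact_mod_cast this.symm
  · exfalso
    have : (b : ℤ) * -1 = a := hc
    omega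


theorem finite_of_finite_subgroups (h : (Set.univ : Set (Subgroup G)).Finite) : Finite G := by
  have htor : ∀ g : G, IsOfFinOrder g := by
    intro g
    by_contra hg
    have hinf : (Set.univ : Set (Subgroup G)).Infinite := by
      apply Set.infinite_of_injective_forall_mem
        (f := fun k : ℕ => zpowers (g ^ (k + 1)))
      · intro i j hij
        have := zpowers_pow_inj hg (Nat.le_add_left 1 i) (Nat.le_add_left 1 j) hij
        omega
      · intro k; trivial
    exact hinf h
  have huniv : (Set.univ : Set G).Finite := by
    have hsub : (Set.univ : Set G) ⊆ ⋃ H ∈ Set.range (fun g : G => zpowers g), (H : Set G) := by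
      intro x _
      exact Set.mem_biUnion (Set.mem_range_self x) (mem_zpowers x)
    apply Set.Finite.subset _ hsub
    apply Set.Finite.biUnion (h.subset (Set.subset_univ _))
    rintro - ⟨g, rfl⟩
    exact finite_zpowers_set (htor g)
  rw [Set.finite_univ_iff] at huniv
  exact huniv

theorem isCyclic_zpowers (g : G) : IsCyclic (zpowers g) := by
  constructor
  refine ⟨⟨g, mem_zpowers g⟩, ?_⟩
  rintro ⟨x, c, rfl⟩
  exact ⟨c, by ext; simp⟩

theorem isCyclic_of_injective' {H : Type*} [Group H] [IsCyclic H] (f : G →* H)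
    (hf : Function.Injective f) : IsCyclic G := by
  have : IsCyclic f.range := Subgroup.isCyclic f.range
  exact isCyclic_of_surjective (MonoidHom.ofInjective hf).symm (MulEquiv.surjective _)


theorem quotient_exponent (m : ℕ) [inst : (powerSubgroup G m).Normal]
    (x : G ⧸ powerSubgroup G m) : x ^ m = 1 := by
  obtain ⟨y, rfl⟩ := QuotientGroup.mk'_surjective _ x
  rw [← map_pow]
  exact (QuotientGroup.eq_one_iff _).mpr (mem_power y m)

theorem finite_of_exponent (hS : (NPS G).Finite) {e : ℕ} (he : 1 ≤ e)
    (hexp : ∀ x : G, x ^ e = 1) : Finite G := by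
  apply finite_of_finite_subgroups
  have hsub : (Set.univ : Set (Subgroup G)) ⊆ NPS G ∪ (powerSubgroup G '' (Set.Iic e)) := by
    intro H _
    by_cases hH : ∀ m : ℕ, H ≠ powerSubgroup G m
    · exact Or.inl hH
    · push_neg at hH
      obtain ⟨m, rfl⟩ := hH
      right
      exact ⟨Nat.gcd m e, Nat.le_of_dvd he (Nat.gcd_dvd_right m e), (power_gcd hexp m).symm⟩
  exact Set.Finite.subset (hS.union ((Set.finite_Iic e).image _)) hsub

theorem exists_w (hS : (NPS G).Finite) [Infinite G] :
    ∃ (w : G) (t : ℕ), 1 ≤ t ∧ ¬IsOfFinOrder w ∧ powerSubgroup G t = zpowers w := by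
  by_cases htor : ∀ g : G, IsOfFinOrder g
  · exfalso
    have hcyc : (Set.range fun g : G => zpowers g).Infinite := by
      by_contra hfin
      rw [Set.not_infinite] at hfin
      have huniv : (Set.univ : Set G).Finite := by
        refine Set.Finite.subset (Set.Finite.biUnion (t := fun H => (H : Set G)) hfin ?_) ?_
        · rintro - ⟨g, rfl⟩; exact finite_zpowers_set (htor g)
        · intro x _; exact Set.mem_biUnion (Set.mem_range_self x) (mem_zpowers x)
      exact (not_finite_iff_infinite.mpr ‹Infinite G›) (Set.finite_univ_iff.mp huniv)
    obtain ⟨C, hC⟩ := (hcyc.diff (hS.union (Set.finite_singleton ⊥))).nonempty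
    obtain ⟨⟨g, rfl⟩, hC2⟩ := hC
    rw [Set.mem_union, not_or] at hC2
    obtain ⟨hnp, hbot⟩ := hC2
    rw [Set.mem_singleton_iff] at hbot
    have : ∃ m, zpowers g = powerSubgroup G m := by
      by_contra hcon; push_neg at hcon; exact hnp hcon
    obtain ⟨m, hm⟩ := this
    have hm1 : 1 ≤ m := by
      rcases Nat.eq_zero_or_pos m with rfl | h
      · exact absurd (hm.trans power_zero) hbot
      · exact h
    haveI : (powerSubgroup G m).Normal := power_normal m
    haveI : Finite (G ⧸ powerSubgroup G m) :=
      finite_of_exponent (nps_quotient _ hS) hm1 (quotient_exponent m)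
    haveI : Finite (powerSubgroup G m) := by
      rw [← hm]; exact (finite_zpowers_set (htor g)).to_subtype
    have : Finite G :=
      Finite.of_equiv _ (groupEquivQuotientProdSubgroup (s := powerSubgroup G m)).symm
    exact (not_finite_iff_infinite.mpr ‹Infinite G›) this
  · push_neg at htor
    obtain ⟨g, hg⟩ := htor
    have : ∃ k : ℕ, zpowers (g ^ (k + 1)) ∉ NPS G := by
      by_contra hcon
      push_neg at hcon
      have hinf : (NPS G).Infinite := Set.infinite_of_injective_forall_mem
        (f := fun k : ℕ => zpowers (g ^ (k + 1)))
        (fun i j hij => by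
          have := zpowers_pow_inj hg (Nat.le_add_left 1 i) (Nat.le_add_left 1 j) hij
          omega) hcon
      exact hinf hS
    obtain ⟨k, hk⟩ := this
    have : ∃ t, zpowers (g ^ (k + 1)) = powerSubgroup G t := by
      by_contra hcon; push_neg at hcon; exact hk hcon
    obtain ⟨t, ht⟩ := this
    have hw : ¬IsOfFinOrder (g ^ (k + 1)) := fun hf => hg (hf.of_pow (Nat.succ_ne_zero k))
    refine ⟨g ^ (k + 1), t, ?_, hw, ht.symm⟩
    rcases Nat.eq_zero_or_pos t with rfl | h
    · exfalso
      rw [power_zero] at ht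
      rw [zpowers_eq_bot] at ht
      exact hw (by simp [ht])
    · exact h

theorem infinite_zpowers_set {g : G} (hg : ¬IsOfFinOrder g) : (zpowers g : Set G).Infinite := by
  apply (infinite_powers.mpr hg).mono
  rintro x ⟨n, rfl⟩
  exact ⟨(n : ℤ), zpow_natCast g n⟩

theorem torsion_finite (hS : (NPS G).Finite) {w : G} {t : ℕ}
    (hw : ¬IsOfFinOrder w) (hW : powerSubgroup G t = zpowers w) :
    {x : G | IsOfFinOrder x}.Finite := by
  have hinf : ∀ m : ℕ, 1 ≤ m → (powerSubgroup G m : Set G).Infinite := by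
    intro m hm
    have h1 : (zpowers (w ^ m) : Set G) ⊆ (powerSubgroup G m : Set G) :=
      zpowers_le.mpr (mem_power w m)
    have h2 : ¬IsOfFinOrder (w ^ m) := fun hf => hw (hf.of_pow (by omega))
    exact (infinite_zpowers_set h2).mono h1
  have key : ∀ x : G, IsOfFinOrder x → x ≠ 1 →
      zpowers x ∈ NPS G ∧ ((zpowers x : Set G)).Finite := by
    intro x hx hx1
    refine ⟨?_, finite_zpowers_set hx⟩
    intro m hm
    rcases Nat.eq_zero_or_pos m with rfl | hm1
    · rw [power_zero] at hm
      exact hx1 (zpowers_eq_bot.mp hm)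
    · exact (hinf m hm1) (by rw [← hm]; exact finite_zpowers_set hx)
  have hsub : {x : G | IsOfFinOrder x} ⊆
      {1} ∪ ⋃ H ∈ {H ∈ NPS G | (H : Set G).Finite}, (H : Set G) := by
    intro x hx
    by_cases hx1 : x = 1
    · exact Or.inl hx1
    · right
      obtain ⟨h1, h2⟩ := key x hx hx1
      exact Set.mem_biUnion (⟨h1, h2⟩ : _ ∧ _) (mem_zpowers x)
  apply Set.Finite.subset _ hsub
  apply (Set.finite_singleton 1).union
  apply Set.Finite.biUnion (hS.subset (Set.sep_subset _ _))
  intro H hH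
  exact hH.2

theorem inversion_false (hS : (NPS G).Finite) {w h : G} (hw : ¬IsOfFinOrder w)
    (hh : h * w * h⁻¹ = w⁻¹) : False := by
  have hinj : Function.Injective fun n : ℤ => w ^ n := injective_zpow_iff_not_isOfFinOrder.mpr hw
  have hconj : ∀ c : ℤ, h * w ^ c * h⁻¹ = w ^ (-c) := by
    intro c
    have : (MulAut.conj h) (w ^ c) = ((MulAut.conj h) w) ^ c := map_zpow _ _ _
    simpa [MulAut.conj_apply, hh, zpow_neg] using this
  have hA : ∀ c a : ℤ, w ^ c = h ^ a → c = 0 := by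
    intro c a hca
    have e1 : h * w ^ c * h⁻¹ = w ^ (-c) := hconj c
    have e2 : h * h ^ a * h⁻¹ = h ^ a := by group
    rw [hca, e2, ← hca] at e1
    have : w ^ (-c) = w ^ c := e1.symm
    have : (fun n : ℤ => w ^ n) (-c) = (fun n : ℤ => w ^ n) c := this
    have := hinj this
    omega
  -- the elements x j = h * w^(2j)
  set x : ℤ → G := fun j => h * w ^ (2 * j) with hxdef
  have hwh : ∀ c : ℤ, w ^ c * h = h * w ^ (-c) := by
    intro c
    have := hconj (-c)
    rw [neg_neg] at this
    rw [← this]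
    group
  have hsq : ∀ j : ℤ, x j * x j = h * h := by
    intro j
    show h * w ^ (2*j) * (h * w ^ (2*j)) = h * h
    have : w ^ (2*j) * h = h * w ^ (-(2*j)) := hwh (2*j)
    calc h * w ^ (2*j) * (h * w ^ (2*j)) = h * (w ^ (2*j) * h) * w ^ (2*j) := by group
    _ = h * (h * w ^ (-(2*j))) * w ^ (2*j) := by rw [this]
    _ = h * h := by group
  have hpow_even : ∀ (j a : ℤ), (x j) ^ (2 * a) = h ^ (2 * a) := by
    intro j a
    have h1 : (x j) ^ (2 : ℤ) = h ^ (2 : ℤ) := by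
      rw [zpow_two, zpow_two]; exact hsq j
    rw [zpow_mul, zpow_mul, h1]
  have hpow_odd : ∀ (j a : ℤ), (x j) ^ (2 * a + 1) = h ^ (2 * a + 1) * w ^ (2 * j) := by
    intro j a
    rw [zpow_add, hpow_even j a, zpow_one, zpow_add, zpow_one]
    show h ^ (2*a) * (h * w ^ (2*j)) = h ^ (2*a) * h * w ^ (2*j)
    group
  have hcore : ∀ i j : ℤ, 1 ≤ j → x j ∈ zpowers (x i) → j = i := by
    intro i j hj hmem
    obtain ⟨c, hc⟩ := hmem
    have hc' : (x i) ^ c = x j := hc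
    rcases Int.even_or_odd c with ⟨a, rfl⟩ | ⟨a, rfl⟩
    · exfalso
      rw [show a + a = 2 * a by ring, hpow_even] at hc'
      -- h ^ (2a) = h * w^(2j)  ⇒ w^(2j) = h^(2a - 1)
      have : w ^ (2*j) = h ^ (2*a - 1) := by
        have : h⁻¹ * h ^ (2*a) = h⁻¹ * (h * w ^ (2*j)) := by rw [hc']
        rw [show h⁻¹ * h ^ (2*a) = h ^ (2*a - 1) by group, show h⁻¹ * (h * w ^ (2*j)) = w ^ (2*j) by group] at this
        exact this.symm
      have := hA _ _ this
      omega
    · rw [hpow_odd] at hc'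
      -- hc' : h ^ (2a+1) * w^(2i) = x j = h * w^(2j)
      have e : w ^ (2*(j - i)) = h ^ (2*a) := by
        have e1 : w ^ (2*j) = h ^ (2*a) * w ^ (2*i) := by
          have : h⁻¹ * (h ^ (2*a+1) * w ^ (2*i)) = h⁻¹ * (h * w ^ (2*j)) := by rw [hc']
          rw [show h⁻¹ * (h ^ (2*a+1) * w ^ (2*i)) = h ^ (2*a) * w ^ (2*i) by group,
            show h⁻¹ * (h * w ^ (2*j)) = w ^ (2*j) by group] at this
          exact this.symm
        calc w ^ (2*(j-i)) = w ^ (2*j) * w ^ (-(2*i)) := by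
              rw [← zpow_add, show (2*j + -(2*i) : ℤ) = 2*(j-i) by ring]
        _ = h ^ (2*a) * w ^ (2*i) * w ^ (-(2*i)) := by rw [e1]
        _ = h ^ (2*a) := by group
      have := hA _ _ e
      omega
  -- conjugation by w shifts: w * x j * w⁻¹ = x (j - 1)
  have hshift : ∀ j : ℤ, w * x j * w⁻¹ = x (j - 1) := by
    intro j
    show w * (h * w ^ (2*j)) * w⁻¹ = h * w ^ (2*(j-1))
    have h1 : w * h = h * w ^ (-(1:ℤ)) := by
      have := hwh 1
      rwa [zpow_one] at this
    calc w * (h * w ^ (2*j)) * w⁻¹ = (w * h) * w ^ (2*j) * w⁻¹ := by group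
    _ = h * w ^ (-(1:ℤ)) * w ^ (2*j) * w⁻¹ := by rw [h1]
    _ = h * (w ^ (-(1:ℤ)) * w ^ (2*j) * w ^ (-(1:ℤ))) := by rw [← zpow_neg_one w]; group
    _ = h * w ^ (2*(j-1)) := by
          rw [← zpow_add, ← zpow_add, show (-(1:ℤ) + 2*j + -(1:ℤ)) = 2*(j-1) by ring]
  -- the subgroups zpowers (x (j+2)) for j : ℕ are distinct non-power subgroups
  have hmemNPS : ∀ j : ℕ, zpowers (x ((j : ℤ) + 2)) ∈ NPS G := by
    intro j m hm
    have hm' : zpowers (x ((j:ℤ) + 2)) = powerSubgroup G m := hm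
    have this : (zpowers (x ((j:ℤ) + 2))).Normal := by
      rw [hm']; exact power_normal m
    have hn : w * x ((j:ℤ)+2) * w⁻¹ ∈ zpowers (x ((j:ℤ)+2)) :=
      this.conj_mem _ (mem_zpowers _) w
    rw [hshift] at hn
    have := hcore ((j:ℤ)+2) ((j:ℤ)+2-1) (by omega) hn
    omega
  have hinfS : (NPS G).Infinite := by
    apply Set.infinite_of_injective_forall_mem (f := fun j : ℕ => zpowers (x ((j:ℤ) + 2)))
    · intro i j hij
      have hij' : zpowers (x ((i:ℤ)+2)) = zpowers (x ((j:ℤ)+2)) := hij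
      have h1 : x ((j:ℤ)+2) ∈ zpowers (x ((i:ℤ)+2)) := by rw [hij']; exact mem_zpowers _
      have := hcore ((i:ℤ)+2) ((j:ℤ)+2) (by omega) h1
      omega
    · exact hmemNPS
  exact hinfS hS

theorem semidirect_false (hS : (NPS G).Finite) (F : Subgroup G) [hFn : F.Normal]
    (hFf : (F : Set G).Finite) {z : G}
    (hdec : ∀ x : G, ∃ v ∈ F, ∃ i : ℤ, x = v * z ^ i)
    (hz0 : ∀ c : ℤ, z ^ c ∈ F → c = 0)
    {r : ℕ} (hr : 1 ≤ r) (hrc : ∀ v ∈ F, z ^ (r : ℤ) * v = v * z ^ (r : ℤ))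
    {u : G} (hu : u ∈ F) (hu1 : u ≠ 1) : False := by
  haveI : Finite F := hFf.to_subtype
  set Λ : ℕ := Nat.card F with hΛdef
  have hΛ : 1 ≤ Λ := Nat.card_pos
  have hvΛ : ∀ v ∈ F, v ^ Λ = 1 := by
    intro v hv
    have h1 : (⟨v, hv⟩ : F) ^ Λ = 1 := pow_card_eq_one'
    have h2 := congrArg (Subtype.val) h1
    simpa using h2
  have hcomm : ∀ (n : ℤ) (v : G), v ∈ F → Commute v (z ^ ((r : ℤ) * n)) := by
    intro n v hv
    have h1 : Commute (z ^ (r : ℤ)) v := hrc v hv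
    have h2 := h1.symm.zpow_right n
    rwa [← zpow_mul] at h2
  set e : ℕ → ℤ := fun j => (r : ℤ) * ((Λ : ℤ) * ((j : ℤ) + 1)) with hedef
  have hepos : ∀ j : ℕ, 0 < e j := by
    intro j
    have h1 : (0:ℤ) < (r:ℤ) := by exact_mod_cast hr
    have h2 : (0:ℤ) < (Λ:ℤ) := by exact_mod_cast hΛ
    have h3 : (0:ℤ) < (j:ℤ) + 1 := by positivity
    positivity
  set μ : ℕ → G := fun j => u * z ^ (e j) with hμdef
  have hμcomm : ∀ j : ℕ, Commute u (z ^ (e j)) := fun j => hcomm _ u hu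
  have hμpow : ∀ (j : ℕ) (c : ℤ), (μ j) ^ c = u ^ c * z ^ (e j * c) := by
    intro j c
    have h1 := (hμcomm j).mul_zpow c
    rw [← zpow_mul] at h1
    exact h1
  have hukc : ∀ c : ℤ, u ^ c ∈ F := fun c => F.zpow_mem hu c
  have hkey : ∀ (j : ℕ) (c d : ℤ), (μ j) ^ c = z ^ d → e j * c = d ∧ u ^ c = 1 := by
    intro j c d hcd
    rw [hμpow] at hcd
    have h1 : u ^ c * z ^ (e j * c - d) = 1 := by
      have : u ^ c * z ^ (e j * c) * (z ^ d)⁻¹ = z ^ d * (z ^ d)⁻¹ := by rw [hcd]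
      rw [mul_inv_cancel] at this
      rw [zpow_sub]
      calc u ^ c * (z ^ (e j * c) * (z ^ d)⁻¹) = u ^ c * z ^ (e j * c) * (z ^ d)⁻¹ := by group
      _ = 1 := this
    have h3 : z ^ (e j * c - d) = (u ^ c)⁻¹ := by
      have := inv_eq_of_mul_eq_one_right h1
      rw [← this]
    have h4 : z ^ (e j * c - d) ∈ F := by rw [h3]; exact F.inv_mem (hukc c)
    have h5 := hz0 _ h4
    have h6 : e j * c = d := by omega
    refine ⟨h6, ?_⟩
    rw [h6] at h1
    rw [sub_self, zpow_zero, mul_one] at h1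
    exact h1
  have hkey2 : ∀ (i j : ℕ) (c : ℤ), (μ i) ^ c = μ j → e i * c = e j ∧ u ^ (c - 1) = 1 := by
    intro i j c hcd
    rw [hμpow] at hcd
    have h1 : u ^ (c - 1) * z ^ (e i * c - e j) = 1 := by
      have h2 : u⁻¹ * (u ^ c * z ^ (e i * c)) * (z ^ (e j))⁻¹
          = u⁻¹ * (u * z ^ (e j)) * (z ^ (e j))⁻¹ := by rw [hcd]
      calc u ^ (c - 1) * z ^ (e i * c - e j)
          = u⁻¹ * (u ^ c * z ^ (e i * c)) * (z ^ (e j))⁻¹ := by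
            rw [zpow_sub, zpow_sub, zpow_one]; group
      _ = u⁻¹ * (u * z ^ (e j)) * (z ^ (e j))⁻¹ := h2
      _ = 1 := by group
    have h3 : z ^ (e i * c - e j) = (u ^ (c - 1))⁻¹ := by
      have := inv_eq_of_mul_eq_one_right h1
      rw [← this]
    have h4 : z ^ (e i * c - e j) ∈ F := by rw [h3]; exact F.inv_mem (hukc _)
    have h5 := hz0 _ h4
    have h6 : e i * c = e j := by omega
    refine ⟨h6, ?_⟩
    rw [h6] at h1
    rw [sub_self, zpow_zero, mul_one] at h1
    exact h1
  have hμne1 : ∀ j : ℕ, μ j ≠ 1 := by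
    intro j hj
    have h0 : (μ j) ^ (1 : ℤ) = z ^ (0 : ℤ) := by rw [zpow_one, hj, zpow_zero]
    obtain ⟨h1, -⟩ := hkey j 1 0 h0
    have h2 := hepos j
    omega
  have hμnotz : ∀ j : ℕ, μ j ∉ zpowers z := by
    rintro j ⟨c, hc⟩
    have hc' : z ^ c = u * z ^ (e j) := hc
    have h1 : u = z ^ (c - e j) := by
      rw [zpow_sub]
      rw [hc']
      group
    have h2 : z ^ (c - e j) ∈ F := by rw [← h1]; exact hu
    have h3 := hz0 _ h2
    rw [h3, zpow_zero] at h1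
    exact hu1 h1
  have hein : ∀ i j : ℕ, e i = e j → i = j := by
    intro i j hij
    simp only [hedef] at hij
    have h1 : (r:ℤ) ≠ 0 := by exact_mod_cast Nat.one_le_iff_ne_zero.mp hr
    have h2 : (Λ:ℤ) ≠ 0 := by exact_mod_cast Nat.one_le_iff_ne_zero.mp hΛ
    have h3 := mul_left_cancel₀ h1 hij
    have h4 := mul_left_cancel₀ h2 h3
    omega
  -- generation bound: if m = K * r with Λ ∣ K then all m-th powers lie in zpowers z
  have hgen : ∀ (m : ℕ) (K : ℕ), m = (Λ * K) * r → powerSubgroup G m ≤ zpowers z := by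
    intro m K hmK
    apply (Subgroup.closure_le _).mpr
    rintro y ⟨x0, rfl⟩
    show x0 ^ m ∈ (zpowers z : Set G)
    obtain ⟨v, hv, i, hxvi⟩ := hdec x0
    set L : ℕ → G := fun n => z ^ (i * (n : ℤ)) * v * z ^ (-(i * (n : ℤ))) with hLdef
    have hLF : ∀ n : ℕ, L n ∈ F := by
      intro n
      have := hFn.conj_mem v hv (z ^ (i * (n : ℤ)))
      simpa [hLdef, zpow_neg] using this
    set Q : ℕ → G := fun n => ((List.range n).map L).prod with hQdef
    have hform : ∀ n : ℕ, (v * z ^ i) ^ n = Q n * z ^ (i * (n : ℤ)) := by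
      intro n
      induction n with
      | zero => simp [hQdef]
      | succ n ih =>
        have hQs : Q (n + 1) = Q n * L n := by
          simp only [hQdef]
          rw [List.prod_range_succ]
        rw [pow_succ, ih, hQs]
        have : z ^ (i * (n : ℤ)) * (v * z ^ i) = L n * z ^ (i * ((n : ℤ) + 1)) := by
          simp only [hLdef]
          rw [show i * ((n:ℤ) + 1) = i * (n:ℤ) + i by ring, zpow_add]
          group
        calc Q n * z ^ (i * (n:ℤ)) * (v * z ^ i) = Q n * (z ^ (i * (n:ℤ)) * (v * z ^ i)) := by group
        _ = Q n * (L n * z ^ (i * ((n:ℤ) + 1))) := by rw [this]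
        _ = Q n * L n * z ^ (i * (((n:ℕ) + 1 : ℕ) : ℤ)) := by push_cast; group
    have hLper : ∀ n : ℕ, L (n + r) = L n := by
      intro n
      have hcv : z ^ ((r:ℤ) * i) * v = v * z ^ ((r:ℤ) * i) := (hcomm i v hv).symm
      simp only [hLdef]
      have hir : i * ((n + r : ℕ) : ℤ) = i * (n : ℤ) + (r:ℤ) * i := by push_cast; ring
      rw [hir, zpow_add, neg_add, zpow_add]
      calc z ^ (i * (n:ℤ)) * z ^ ((r:ℤ) * i) * v * (z ^ (-(i * (n:ℤ))) * z ^ (-((r:ℤ) * i))) 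
          = z ^ (i * (n:ℤ)) * (z ^ ((r:ℤ) * i) * v) * z ^ (-(i * (n:ℤ))) * z ^ (-((r:ℤ) * i)) := by group
      _ = z ^ (i * (n:ℤ)) * (v * z ^ ((r:ℤ) * i)) * z ^ (-(i * (n:ℤ))) * z ^ (-((r:ℤ) * i)) := by rw [hcv]
      _ = z ^ (i * (n:ℤ)) * v * (z ^ ((r:ℤ) * i) * z ^ (-(i * (n:ℤ))) * z ^ (-((r:ℤ) * i))) := by group
      _ = z ^ (i * (n:ℤ)) * v * z ^ (-(i * (n:ℤ))) := by
            rw [show z ^ ((r:ℤ) * i) * z ^ (-(i * (n:ℤ))) * z ^ (-((r:ℤ) * i)) = z ^ (-(i * (n:ℤ))) by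
              rw [← zpow_add, ← zpow_add]; ring_nf]
    have hLper2 : ∀ (b n : ℕ), L (n + b * r) = L n := by
      intro b
      induction b with
      | zero => intro n; simp
      | succ b ih =>
        intro n
        have : n + (b + 1) * r = (n + b * r) + r := by ring
        rw [this, hLper, ih]
    have hQadd : ∀ (a n : ℕ), Q (a * r + n) = Q (a * r) * Q n := by
      intro a n
      induction n with
      | zero => simp [hQdef]
      | succ n ih =>
        have h1 : Q (a * r + (n + 1)) = Q (a * r + n) * L (a * r + n) := by
          simp only [hQdef]
          rw [show a * r + (n + 1) = (a * r + n) + 1 by ring, List.prod_range_succ]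
        have h2 : L (a * r + n) = L n := by rw [show a * r + n = n + a * r by ring, hLper2]
        have h3 : Q (n + 1) = Q n * L n := by
          simp only [hQdef]; rw [List.prod_range_succ]
        rw [h1, h2, ih, h3]
        group
    have hblock : ∀ a : ℕ, Q (a * r) = (Q r) ^ a := by
      intro a
      induction a with
      | zero => simp [hQdef]
      | succ a ih =>
        have : (a + 1) * r = a * r + r := by ring
        rw [this, hQadd a r, ih, pow_succ]
    have hQrF : Q r ∈ F := by
      apply Subgroup.list_prod_mem
      intro x hx
      obtain ⟨n, -, rfl⟩ := List.mem_map.mp hx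
      exact hLF n
    -- now compute x0 ^ m
    rw [hxvi, hform m]
    have hQm : Q m = 1 := by
      rw [hmK, show Λ * K * r = (Λ * K) * r by ring, hblock, pow_mul, hvΛ _ hQrF, one_pow]
    rw [hQm, one_mul]
    exact ⟨i * (m : ℤ), rfl⟩
  -- each zpowers (μ j) is a non-power subgroup
  have hmemNPS : ∀ j : ℕ, zpowers (μ j) ∈ NPS G := by
    intro j m hm
    have hm' : zpowers (μ j) = powerSubgroup G m := hm
    have hm0 : m ≠ 0 := by
      intro h0
      rw [h0, power_zero] at hm'
      exact hμne1 j (zpowers_eq_bot.mp hm')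
    -- z^m ∈ powerSubgroup G m = zpowers (μ j)
    have h1 : z ^ m ∈ zpowers (μ j) := by rw [hm']; exact mem_power z m
    obtain ⟨c, hc⟩ := h1
    have hc0 : (μ j) ^ c = z ^ m := hc
    have hc' : (μ j) ^ c = z ^ (m : ℤ) := by rw [hc0, zpow_natCast]
    obtain ⟨h2, -⟩ := hkey j c (m : ℤ) hc'
    -- m = e j * c, c > 0
    have hcpos : 0 < c := by
      have h3 := hepos j
      have h4 : (0:ℤ) < (m:ℤ) := by exact_mod_cast Nat.pos_of_ne_zero hm0
      nlinarith
    -- m = (Λ * ((j+1) * c.toNat)) * r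
    have hmK : m = (Λ * ((j + 1) * c.toNat)) * r := by
      have h5 : (m:ℤ) = (Λ * ((j + 1) * c.toNat) * r : ℕ) := by
        push_cast [Int.toNat_of_nonneg hcpos.le]
        rw [← h2]
        simp only [hedef]
        ring
      exact_mod_cast h5
    have h6 := hgen m _ hmK
    have h7 : μ j ∈ powerSubgroup G m := by rw [← hm']; exact mem_zpowers _
    exact hμnotz j (h6 h7)
  have hdist : Function.Injective fun j : ℕ => zpowers (μ j) := by
    intro i j hij
    have hij' : zpowers (μ i) = zpowers (μ j) := hij
    have h1 : μ j ∈ zpowers (μ i) := by rw [hij']; exact mem_zpowers _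
    obtain ⟨c, hc⟩ := h1
    obtain ⟨h2, -⟩ := hkey2 i j c hc
    have h3 : μ i ∈ zpowers (μ j) := by rw [← hij']; exact mem_zpowers _
    obtain ⟨c2, hc2⟩ := h3
    obtain ⟨h4, -⟩ := hkey2 j i c2 hc2
    -- e i * c = e j, e j * c2 = e i, all positive
    have h5 := hepos i
    have h6 := hepos j
    apply hein
    have hcc : e i * (c * c2) = e i * 1 := by
      calc e i * (c * c2) = (e i * c) * c2 := by ring
      _ = e j * c2 := by rw [h2]
      _ = e i := h4
      _ = e i * 1 := by ring
    have hcc1 : c * c2 = 1 := mul_left_cancel₀ h5.ne' hcc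
    rcases Int.mul_eq_one_iff_eq_one_or_neg_one.mp hcc1 with ⟨rfl, -⟩ | ⟨rfl, -⟩
    · rw [mul_one] at h2; exact h2
    · exfalso; rw [mul_neg_one] at h2; linarith
  exact (Set.infinite_of_injective_forall_mem hdist hmemNPS) hS

theorem not_finorder_of_generator {Q : Type*} [Group Q] [Infinite Q] {g : Q}
    (hg : ∀ x : Q, x ∈ zpowers g) : ¬IsOfFinOrder g := by
  intro hf
  have h1 : (Set.univ : Set Q).Finite := (finite_zpowers_set hf).subset (fun x _ => hg x)
  exact (not_finite_iff_infinite.mpr ‹Infinite Q›) (Set.finite_univ_iff.mp h1)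

theorem cyclic_of_torsionfree {A : Type*} [CommGroup A] (hS : (NPS A).Finite) [Infinite A]
    (htf : ∀ x : A, IsOfFinOrder x → x = 1) : IsCyclic A := by
  obtain ⟨w, t, ht, hw, hW⟩ := exists_w hS
  have hinj : Function.Injective (powMonoidHom t : A →* A) := by
    intro a b hab
    have hab' : a ^ t = b ^ t := hab
    have h1 : (a * b⁻¹) ^ t = 1 := by
      rw [mul_pow, inv_pow, hab', mul_inv_cancel]
    have h2 : a * b⁻¹ = 1 := htf _ (isOfFinOrder_iff_pow_eq_one.mpr ⟨t, by omega, h1⟩)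
    rw [mul_inv_eq_one] at h2
    exact h2
  haveI : IsCyclic (zpowers w) := isCyclic_zpowers w
  refine isCyclic_of_injective' ((powMonoidHom t).codRestrict (zpowers w) ?_) ?_
  · intro a
    show a ^ t ∈ zpowers w
    rw [← hW]
    exact mem_power a t
  · intro a b hab
    exact hinj (congrArg Subtype.val hab)

theorem exists_period (F : Subgroup G) (hFf : (F : Set G).Finite) [hFn : F.Normal] (z : G) :
    ∃ r : ℕ, 1 ≤ r ∧ ∀ v ∈ F, z ^ (r : ℤ) * v = v * z ^ (r : ℤ) := by
  haveI : Finite F := hFf.to_subtype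
  set φ : ℕ → (F → F) := fun n v =>
    ⟨z ^ (n : ℤ) * (v : G) * z ^ (-(n : ℤ)), by
      have := hFn.conj_mem (v : G) v.2 (z ^ (n : ℤ))
      simpa [zpow_neg] using this⟩ with hφdef
  obtain ⟨n₁, n₂, hne, heq⟩ := Finite.exists_ne_map_eq_of_infinite φ
  have key : ∀ (a b : ℕ), φ a = φ b → a < b → ∀ v ∈ F,
      z ^ ((b - a : ℕ) : ℤ) * v = v * z ^ ((b - a : ℕ) : ℤ) := by
    intro a b hab hlt v hv
    have h1 : z ^ (a : ℤ) * v * z ^ (-(a : ℤ)) = z ^ (b : ℤ) * v * z ^ (-(b : ℤ)) := by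
      have := congrFun hab ⟨v, hv⟩
      exact congrArg Subtype.val this
    have hcast : ((b - a : ℕ) : ℤ) = (b : ℤ) - (a : ℤ) := by omega
    rw [hcast]
    calc z ^ ((b:ℤ) - (a:ℤ)) * v
        = z ^ (-(a:ℤ)) * (z ^ (b:ℤ) * v * z ^ (-(b:ℤ))) * z ^ (b:ℤ) := by group
    _ = z ^ (-(a:ℤ)) * (z ^ (a:ℤ) * v * z ^ (-(a:ℤ))) * z ^ (b:ℤ) := by rw [h1]
    _ = v * z ^ ((b:ℤ) - (a:ℤ)) := by group
  rcases hne.lt_or_gt with hlt | hlt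
  · exact ⟨n₂ - n₁, by omega, key n₁ n₂ heq hlt⟩
  · exact ⟨n₁ - n₂, by omega, key n₂ n₁ heq.symm hlt⟩

theorem abCore {A : Type*} [CommGroup A] (hS : (NPS A).Finite) [Infinite A] : IsCyclic A := by
  by_cases hT : ∀ x : A, IsOfFinOrder x → x = 1
  · exact cyclic_of_torsionfree hS hT
  exfalso
  push_neg at hT
  obtain ⟨u, hu, hu1⟩ := hT
  obtain ⟨w, t, ht, hw, hW⟩ := exists_w hS
  have hTfin : {x : A | IsOfFinOrder x}.Finite := torsion_finite hS hw hW
  set T : Subgroup A := CommGroup.torsion A with hTdef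
  have hTc : (T : Set A).Finite := hTfin
  haveI : Finite T := hTc.to_subtype
  haveI : Infinite (A ⧸ T) := by
    rw [← not_finite_iff_infinite]
    intro hfin
    have : Finite A := Finite.of_equiv _ (groupEquivQuotientProdSubgroup (s := T)).symm
    exact (not_finite_iff_infinite.mpr ‹Infinite A›) this
  have hSQ : (NPS (A ⧸ T)).Finite := nps_quotient T hS
  have hQtf : ∀ x : A ⧸ T, IsOfFinOrder x → x = 1 := by
    intro x hx
    obtain ⟨a, rfl⟩ := QuotientGroup.mk'_surjective T x
    obtain ⟨n, hn, hxn⟩ := isOfFinOrder_iff_pow_eq_one.mp hx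
    have h1 : a ^ n ∈ T := by
      rw [← QuotientGroup.eq_one_iff (G := A) (N := T), ← map_pow (QuotientGroup.mk' T) a n] at *
      exact hxn
    have h2 : IsOfFinOrder a := IsOfFinOrder.of_pow (h1 : IsOfFinOrder (a ^ n)) (by omega)
    exact (QuotientGroup.eq_one_iff _).mpr h2
  have hQcyc : IsCyclic (A ⧸ T) := cyclic_of_torsionfree hSQ hQtf
  obtain ⟨gbar, hgen⟩ := hQcyc.exists_generator
  have hgnf : ¬IsOfFinOrder gbar := not_finorder_of_generator hgen
  obtain ⟨z, hz⟩ := QuotientGroup.mk'_surjective T gbar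
  have hdec : ∀ x : A, ∃ v ∈ T, ∃ i : ℤ, x = v * z ^ i := by
    intro x
    obtain ⟨i, hi⟩ := hgen (QuotientGroup.mk' T x)
    refine ⟨x * z ^ (-i), ?_, i, by group⟩
    rw [← QuotientGroup.eq_one_iff (G := A) (N := T)]
    have : QuotientGroup.mk' T (x * z ^ (-i)) = QuotientGroup.mk' T x * (gbar) ^ (-i) := by
      rw [map_mul, map_zpow, hz]
    rw [show ((x * z ^ (-i) : A) : A ⧸ T) = QuotientGroup.mk' T (x * z ^ (-i)) from rfl, this,
      ← hi, ← zpow_add]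
    simp
  have hz0 : ∀ c : ℤ, z ^ c ∈ T → c = 0 := by
    intro c hc
    have h1 : gbar ^ c = 1 := by
      rw [← hz, ← map_zpow]
      exact (QuotientGroup.eq_one_iff _).mpr hc
    have hinj := injective_zpow_iff_not_isOfFinOrder.mpr hgnf
    have : (fun n : ℤ => gbar ^ n) c = (fun n : ℤ => gbar ^ n) 0 := by
      simpa using h1
    exact hinj this
  exact semidirect_false hS T hTc hdec hz0 le_rfl
    (fun v _ => mul_comm _ v) hu hu1

end NP

theorem finite_iff_finitely_many_nonpower {G : Type*} [Group G] (h : ¬IsCyclic G) :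
    Finite G ↔ {H : Subgroup G | ∀ m : ℕ, H ≠ powerSubgroup G m}.Finite := by
  constructor
  · intro hfin
    haveI : Finite (Subgroup G) :=
      Finite.of_injective (fun H : Subgroup G => (H : Set G)) SetLike.coe_injective
    exact Set.toFinite _
  · intro hS
    by_contra hfin
    haveI : Infinite G := not_finite_iff_infinite.mp hfin
    have hS' : (NP.NPS G).Finite := hS
    obtain ⟨w, t, ht, hw, hW⟩ := NP.exists_w hS'
    haveI hnorm := NP.power_normal (G := G) t
    haveI hfinQ : Finite (G ⧸ powerSubgroup G t) :=
      NP.finite_of_exponent (NP.nps_quotient _ hS') ht (NP.quotient_exponent t)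
    have hWnormal : (Subgroup.zpowers w).Normal := by rw [← hW]; exact NP.power_normal t
    have hinjw := injective_zpow_iff_not_isOfFinOrder.mpr hw
    have hcent : ∀ g : G, g * w = w * g := by
      intro g
      by_contra hg
      have h1 : g * w * g⁻¹ ∈ Subgroup.zpowers w :=
        hWnormal.conj_mem w (Subgroup.mem_zpowers w) g
      have h2 : g⁻¹ * w * g ∈ Subgroup.zpowers w := by
        have := hWnormal.conj_mem w (Subgroup.mem_zpowers w) g⁻¹
        simpa using this
      obtain ⟨c, hc⟩ := h1
      obtain ⟨d, hd⟩ := h2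
      have hc' : w ^ c = g * w * g⁻¹ := hc
      have hd' : w ^ d = g⁻¹ * w * g := hd
      have h3 : w ^ (d * c) = w := by
        calc w ^ (d * c) = (w ^ d) ^ c := by rw [zpow_mul]
        _ = (g⁻¹ * w * g) ^ c := by rw [hd']
        _ = g⁻¹ * w ^ c * g := by
              have h4 : (MulAut.conj g⁻¹) (w ^ c) = ((MulAut.conj g⁻¹) w) ^ c := map_zpow _ _ _
              simp only [MulAut.conj_apply, inv_inv] at h4
              exact h4.symm
        _ = g⁻¹ * (g * w * g⁻¹) * g := by rw [hc']
        _ = w := by group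
      have hdc : d * c = 1 := by
        have h5 : (fun n : ℤ => w ^ n) (d * c) = (fun n : ℤ => w ^ n) 1 := by simpa using h3
        exact hinjw h5
      rcases Int.mul_eq_one_iff_eq_one_or_neg_one.mp hdc with ⟨-, rfl⟩ | ⟨-, rfl⟩
      · rw [zpow_one] at hc'
        apply hg
        have h6 : w * g = g * w := by
          conv_lhs => rw [hc']
          group
        exact h6.symm
      · rw [zpow_neg_one] at hc'
        exact NP.inversion_false hS' hw hc'.symm
    have hWc : Subgroup.zpowers w ≤ Subgroup.center G :=
      Subgroup.zpowers_le.mpr (Subgroup.mem_center_iff.mpr hcent)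
    haveI : Finite (G ⧸ Subgroup.zpowers w) := by rw [← hW]; exact hfinQ
    haveI : (Subgroup.zpowers w).FiniteIndex := (Subgroup.zpowers w).finiteIndex_of_finite_quotient
    haveI : (Subgroup.center G).FiniteIndex := Subgroup.finiteIndex_of_le hWc
    have hidx : (Subgroup.center G).index ≠ 0 := Subgroup.FiniteIndex.index_ne_zero
    have hct : ∀ x ∈ commutator G, IsOfFinOrder x := by
      intro x hx
      have h1 : MonoidHom.transferCenterPow G x = 1 := by
        letI : CommGroup (Subgroup.center G) := { (Subgroup.center G).toGroup with
          mul_comm := fun a b => Subtype.ext (Subgroup.mem_center_iff.mp b.2 a) }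
        exact Abelianization.commutator_subset_ker (MonoidHom.transferCenterPow G) hx
      have h2 : x ^ (Subgroup.center G).index = 1 := by
        have h3 := MonoidHom.transferCenterPow_apply (G := G) x
        rw [h1] at h3
        simpa using h3.symm
      exact isOfFinOrder_iff_pow_eq_one.mpr ⟨_, Nat.pos_of_ne_zero hidx, h2⟩
    by_cases hab : commutator G = ⊥
    · have hc : ∀ a b : G, a * b = b * a := by
        intro a b
        have h1 : a * b * a⁻¹ * b⁻¹ ∈ commutator G := by
          rw [commutator_def]
          exact Subgroup.commutator_mem_commutator (Subgroup.mem_top a) (Subgroup.mem_top b)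
        rw [hab] at h1
        exact commutatorElement_eq_one_iff_mul_comm.mp (Subgroup.mem_bot.mp h1)
      letI cg : CommGroup G := { ‹Group G› with mul_comm := hc }
      exact h (NP.abCore hS')
    · rcases Subgroup.bot_or_exists_ne_one (commutator G) with hbot | ⟨u, hu, hu1⟩
      · exact hab hbot
      have hTfin : {x : G | IsOfFinOrder x}.Finite := NP.torsion_finite hS' hw hW
      have hFf : ((commutator G : Subgroup G) : Set G).Finite :=
        hTfin.subset (fun x hx => hct x hx)
      haveI : Finite (commutator G) := hFf.to_subtype
      haveI : Infinite (G ⧸ commutator G) := by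
        rw [← not_finite_iff_infinite]
        intro hfinAb
        have hfing : Finite G :=
          Finite.of_equiv _ (Subgroup.groupEquivQuotientProdSubgroup (s := commutator G)).symm
        exact (not_finite_iff_infinite.mpr ‹Infinite G›) hfing
      have hSab : (NP.NPS (G ⧸ commutator G)).Finite := NP.nps_quotient (commutator G) hS'
      have hAbCyc : IsCyclic (G ⧸ commutator G) := by
        haveI hinfab : Infinite (Abelianization G) := ‹Infinite (G ⧸ commutator G)›
        have h9 : (NP.NPS (Abelianization G)).Finite := hSab
        exact NP.abCore h9
      obtain ⟨gbar, hgen⟩ := hAbCyc.exists_generator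
      have hgnf : ¬IsOfFinOrder gbar := NP.not_finorder_of_generator hgen
      obtain ⟨z, hz⟩ := QuotientGroup.mk'_surjective (commutator G) gbar
      have hdec : ∀ x : G, ∃ v ∈ commutator G, ∃ i : ℤ, x = v * z ^ i := by
        intro x
        obtain ⟨i, hi⟩ := hgen (QuotientGroup.mk' (commutator G) x)
        refine ⟨x * z ^ (-i), ?_, i, by group⟩
        rw [← QuotientGroup.eq_one_iff (G := G) (N := commutator G)]
        have h7 : QuotientGroup.mk' (commutator G) (x * z ^ (-i))
            = QuotientGroup.mk' (commutator G) x * gbar ^ (-i) := by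
          rw [map_mul, map_zpow, hz]
        rw [show ((x * z ^ (-i) : G) : G ⧸ commutator G)
            = QuotientGroup.mk' (commutator G) (x * z ^ (-i)) from rfl, h7, ← hi, ← zpow_add]
        simp
      have hz0 : ∀ c : ℤ, z ^ c ∈ commutator G → c = 0 := by
        intro c hc
        have h1 : gbar ^ c = 1 := by
          rw [← hz, ← map_zpow]
          exact (QuotientGroup.eq_one_iff _).mpr hc
        have h5 : (fun n : ℤ => gbar ^ n) c = (fun n : ℤ => gbar ^ n) 0 := by simpa using h1
        exact injective_zpow_iff_not_isOfFinOrder.mpr hgnf h5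
      obtain ⟨r, hr, hrc⟩ := NP.exists_period (commutator G) hFf z
      exact NP.semidirect_false hS' (commutator G) hFf hdec hz0 hr hrc hu hu1
end

section
/- The quaternion group Q₈ of order 8 has exactly 3 non-power subgroups, namely its three cyclic subgroups of order 4. -/
open Subgroup QuaternionGroup

private lemma qpow4 : ∀ g : QuaternionGroup 2, g ^ 4 = 1 := by decide

private lemma qsq1 : ∀ g : QuaternionGroup 2, g ^ 2 = 1 → g = 1 ∨ g = a 2 := by decide

private lemma qcard : Nat.card (QuaternionGroup 2) = 8 := by
  rw [Nat.card_eq_fintype_card]; decide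

/-- the center, `zpowers (a 2)` -/
private def zc : Subgroup (QuaternionGroup 2) := zpowers (a 2)

private lemma zc_card : Nat.card zc = 2 := by
  rw [zc, Nat.card_zpowers]
  exact orderOf_eq_prime (by decide) (by decide)

private lemma ps_mod (m : ℕ) :
    powerSubgroup (QuaternionGroup 2) m = powerSubgroup (QuaternionGroup 2) (m % 4) := by
  have heq : ∀ g : QuaternionGroup 2, g ^ m = g ^ (m % 4) := by
    intro g
    conv_lhs => rw [← Nat.div_add_mod m 4]
    rw [pow_add, pow_mul, qpow4, one_pow, one_mul]
  unfold powerSubgroup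
  simp only [heq]

private lemma ps0 : powerSubgroup (QuaternionGroup 2) 0 = ⊥ := by
  unfold powerSubgroup
  simp [Set.range_const]

private lemma ps1 : powerSubgroup (QuaternionGroup 2) 1 = ⊤ := by
  unfold powerSubgroup
  simp

private lemma ps2 : powerSubgroup (QuaternionGroup 2) 2 = zc := by
  unfold powerSubgroup
  have hr : (Set.range fun g : QuaternionGroup 2 => g ^ 2) = {1, a 2} := by
    have h : ∀ x : QuaternionGroup 2, (∃ g, g ^ 2 = x) ↔ (x = 1 ∨ x = a 2) := by decide
    ext x
    simpa using h x
  rw [hr]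
  apply le_antisymm
  · rw [closure_le]
    rintro x (rfl | rfl)
    · exact one_mem _
    · exact mem_zpowers _
  · rw [zc, zpowers_le]
    exact Subgroup.subset_closure (by simp)

private lemma ps3 : powerSubgroup (QuaternionGroup 2) 3 = ⊤ := by
  rw [eq_top_iff]
  intro g _
  apply Subgroup.subset_closure
  refine ⟨g ^ 3, ?_⟩
  show (g ^ 3) ^ 3 = g
  rw [← pow_mul, show (3 * 3 : ℕ) = 4 * 2 + 1 from rfl, pow_add, pow_mul, qpow4, one_pow,
    one_mul, pow_one]

private lemma ps_cases (m : ℕ) :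
    powerSubgroup (QuaternionGroup 2) m = ⊥ ∨ powerSubgroup (QuaternionGroup 2) m = zc ∨
      powerSubgroup (QuaternionGroup 2) m = ⊤ := by
  rw [ps_mod]
  have h : m % 4 < 4 := Nat.mod_lt _ (by norm_num)
  interval_cases hm : (m % 4)
  · exact Or.inl ps0
  · exact Or.inr (Or.inr ps1)
  · exact Or.inr (Or.inl ps2)
  · exact Or.inr (Or.inr ps3)

private lemma dvd8 (n : ℕ) (h : n ∣ 8) : n = 1 ∨ n = 2 ∨ n = 4 ∨ n = 8 := by
  have h0 : 0 < n := Nat.pos_of_dvd_of_pos h (by norm_num)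
  have hle : n ≤ 8 := Nat.le_of_dvd (by norm_num) h
  interval_cases n <;> omega

private lemma ord4 (g : QuaternionGroup 2) (hg : g ^ 2 ≠ 1) : orderOf g = 4 := by
  have hdvd : orderOf g ∣ 4 := orderOf_dvd_of_pow_eq_one (qpow4 g)
  have h4 : orderOf g ≤ 4 := Nat.le_of_dvd (by norm_num) hdvd
  have h0 : 0 < orderOf g := orderOf_pos g
  have hc : orderOf g = 1 ∨ orderOf g = 2 ∨ orderOf g = 3 ∨ orderOf g = 4 := by omega
  rcases hc with h | h | h | h
  · rw [orderOf_eq_one_iff] at h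
    exact absurd (by rw [h, one_pow]) hg
  · have hp := pow_orderOf_eq_one g
    rw [h] at hp
    exact absurd hp hg
  · rw [h] at hdvd; norm_num at hdvd
  · exact h

private lemma card4_zpowers (H : Subgroup (QuaternionGroup 2)) (h4 : Nat.card H = 4) :
    ∃ g : QuaternionGroup 2, g ^ 2 ≠ 1 ∧ H = zpowers g := by
  by_cases hall : ∀ g ∈ H, g ^ 2 = 1
  · have hle : H ≤ zc := by
      intro g hg
      rcases qsq1 g (hall g hg) with rfl | rfl
      · exact one_mem _
      · exact mem_zpowers _
    have := Subgroup.card_le_of_le hle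
    rw [h4, zc_card] at this
    omega
  · push_neg at hall
    obtain ⟨g, hgH, hg2⟩ := hall
    refine ⟨g, hg2, ?_⟩
    have := Subgroup.eq_of_le_of_card_ge (zpowers_le.2 hgH)
      (by rw [Nat.card_zpowers, ord4 g hg2, h4])
    exact this.symm

private lemma zpowers_cyc_card (g : QuaternionGroup 2) (hg : g ^ 2 ≠ 1) :
    IsCyclic (zpowers g) ∧ Nat.card (zpowers g) = 4 := by
  have hc : Nat.card (zpowers g) = 4 := by rw [Nat.card_zpowers, ord4 g hg]
  refine ⟨?_, hc⟩
  apply isCyclic_of_orderOf_eq_card (⟨g, mem_zpowers g⟩ : zpowers g)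
  rw [Nat.card_zpowers]
  exact (Subgroup.orderOf_coe (⟨g, mem_zpowers g⟩ : zpowers g)).symm

private lemma zpowers_three (g : QuaternionGroup 2) (hg : g ^ 2 ≠ 1) :
    zpowers g = zpowers (a 1) ∨ zpowers g = zpowers (xa 0) ∨ zpowers g = zpowers (xa 1) := by
  have key : ∀ x y : QuaternionGroup 2, x = y ^ 3 → y = x ^ 3 → zpowers x = zpowers y :=
    fun x y h1 h2 => le_antisymm (zpowers_le.2 (h1 ▸ npow_mem_zpowers y 3))
      (zpowers_le.2 (h2 ▸ npow_mem_zpowers x 3))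
  have hcases : g = a 1 ∨ g = a 3 ∨ g = xa 0 ∨ g = xa 2 ∨ g = xa 1 ∨ g = xa 3 := by
    revert hg; revert g; decide
  rcases hcases with rfl | rfl | rfl | rfl | rfl | rfl
  · exact Or.inl rfl
  · exact Or.inl (key _ _ (by decide) (by decide))
  · exact Or.inr (Or.inl rfl)
  · exact Or.inr (Or.inl (key _ _ (by decide) (by decide)))
  · exact Or.inr (Or.inr rfl)
  · exact Or.inr (Or.inr (key _ _ (by decide) (by decide)))

private lemma zpowers_ne (x y : QuaternionGroup 2) (hxy : x * y ≠ y * x) :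
    zpowers x ≠ zpowers y := by
  intro h
  have : y ∈ zpowers x := h ▸ mem_zpowers y
  obtain ⟨k, hk⟩ := mem_zpowers_iff.mp this
  exact hxy (hk ▸ ((Commute.refl x).zpow_right k)).eq

theorem quaternion_nonpower_subgroups :
    {H : Subgroup (QuaternionGroup 2) | ∀ m : ℕ, H ≠ powerSubgroup (QuaternionGroup 2) m} =
      {H : Subgroup (QuaternionGroup 2) | IsCyclic H ∧ Nat.card H = 4} ∧
    {H : Subgroup (QuaternionGroup 2) |
      ∀ m : ℕ, H ≠ powerSubgroup (QuaternionGroup 2) m}.ncard = 3 := by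
  have hset : {H : Subgroup (QuaternionGroup 2) | ∀ m : ℕ,
      H ≠ powerSubgroup (QuaternionGroup 2) m} =
      {H : Subgroup (QuaternionGroup 2) | IsCyclic H ∧ Nat.card H = 4} := by
    ext H
    simp only [Set.mem_setOf_eq]
    constructor
    · intro hnp
      have hdvd : Nat.card H ∣ 8 := qcard ▸ Subgroup.card_subgroup_dvd_card H
      have hpos : 0 < Nat.card H := Nat.card_pos
      have hcases : Nat.card H = 1 ∨ Nat.card H = 2 ∨ Nat.card H = 4 ∨ Nat.card H = 8 :=
        dvd8 _ hdvd
      rcases hcases with h1 | h2 | h4 | h8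
      · exact absurd (ps0 ▸ Subgroup.card_eq_one.mp h1) (hnp 0)
      · exfalso
        apply hnp 2
        rw [ps2]
        rcases H.bot_or_exists_ne_one with rfl | ⟨g, hgH, hg1⟩
        · rw [Subgroup.card_bot] at h2; omega
        · have hgsq : g ^ 2 = 1 := by
            have := pow_card_eq_one' (G := H) (x := ⟨g, hgH⟩)
            rw [h2] at this
            simpa [← SetLike.coe_eq_coe] using congrArg Subtype.val this
          rcases qsq1 g hgsq with rfl | rfl
          · exact absurd rfl hg1
          · exact (Subgroup.eq_of_le_of_card_ge (zpowers_le.2 hgH)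
              (by rw [zc_card] at *; omega : Nat.card H ≤ Nat.card zc)).symm ▸ rfl
      · obtain ⟨g, hg2, rfl⟩ := card4_zpowers H h4
        exact zpowers_cyc_card g hg2
      · exact absurd (ps1 ▸ Subgroup.eq_top_of_card_eq H (h8.trans qcard.symm)) (hnp 1)
    · rintro ⟨-, h4⟩ m heq
      rcases ps_cases m with hm | hm | hm <;> rw [heq, hm] at h4
      · rw [Subgroup.card_bot] at h4; omega
      · rw [zc_card] at h4; omega
      · rw [Subgroup.card_top, qcard] at h4; omega
  refine ⟨hset, ?_⟩
  rw [hset]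
  have hS : {H : Subgroup (QuaternionGroup 2) | IsCyclic H ∧ Nat.card H = 4} =
      {zpowers (a 1), zpowers (xa 0), zpowers (xa 1)} := by
    ext H
    simp only [Set.mem_setOf_eq, Set.mem_insert_iff, Set.mem_singleton_iff]
    constructor
    · rintro ⟨-, h4⟩
      obtain ⟨g, hg2, rfl⟩ := card4_zpowers H h4
      exact zpowers_three g hg2
    · rintro (rfl | rfl | rfl)
      · exact zpowers_cyc_card _ (by decide)
      · exact zpowers_cyc_card _ (by decide)
      · exact zpowers_cyc_card _ (by decide)
  rw [hS]
  have h12 := zpowers_ne (a 1) (xa 0) (by decide)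
  have h13 := zpowers_ne (a 1) (xa 1) (by decide)
  have h23 := zpowers_ne (xa 0) (xa 1) (by decide)
  rw [Set.ncard_insert_of_notMem (by simp [h12, h13]) (Set.toFinite _),
    Set.ncard_pair h23]
end
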